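/- arXiv:1609.07637 — 7 statements merged into one kernel-verified Lean document; each statement's English description precedes it below -/
import Mathlib

section
/- If the distribution of a square-integrable random variable X is symmetric about a point x₀ (i.e., X − x₀ and x₀ − X have the same law), then for all α ∈ (0,1), (e_α(X) + e_{1−α}(X))/2 = x₀. -/
open MeasureTheory

private lemma int_pos_part {Ω : Type*} [MeasurableSpace Ω] (μ : Measure Ω)
    [IsProbabilityMeasure μ] (X : Ω → ℝ) (hX : Integrable X μ) (t : ℝ) :
    Integrable (fun ω => max (X ω - t) 0) μ :=
  (hX.sub (integrable_const t)).pos_part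

private lemma key_identity {Ω : Type*} [MeasurableSpace Ω] (μ : Measure Ω)
    [IsProbabilityMeasure μ] (X : Ω → ℝ) (hX : Integrable X μ) (t : ℝ) :
    (∫ ω, max (X ω - t) 0 ∂μ) - (∫ ω, max (t - X ω) 0 ∂μ) = (∫ ω, X ω ∂μ) - t := by
  have h1 : Integrable (fun ω => max (X ω - t) 0) μ := int_pos_part μ X hX t
  have h2 : Integrable (fun ω => max (t - X ω) 0) μ := by
    have := int_pos_part μ (fun ω => -X ω) hX.neg (-t)
    simpa [neg_sub, sub_eq_add_neg, add_comm] using this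
  rw [← integral_sub h1 h2]
  have : ∀ ω, max (X ω - t) 0 - max (t - X ω) 0 = X ω - t := by
    intro ω
    rcases le_total (X ω) t with h | h
    · rw [max_eq_right (by linarith), max_eq_left (by linarith)]; ring
    · rw [max_eq_left (by linarith), max_eq_right (by linarith)]; ring
  simp only [this]
  rw [integral_sub hX (integrable_const t)]
  simp

private lemma pos_part_antitone {Ω : Type*} [MeasurableSpace Ω] (μ : Measure Ω)
    [IsProbabilityMeasure μ] (X : Ω → ℝ) (hX : Integrable X μ) {s t : ℝ} (hst : s ≤ t) :
    (∫ ω, max (X ω - t) 0 ∂μ) ≤ ∫ ω, max (X ω - s) 0 ∂μ := by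
  refine integral_mono (int_pos_part μ X hX t) (int_pos_part μ X hX s) ?_
  intro ω
  exact max_le_max (by linarith) le_rfl

private lemma neg_part_monotone {Ω : Type*} [MeasurableSpace Ω] (μ : Measure Ω)
    [IsProbabilityMeasure μ] (X : Ω → ℝ) (hX : Integrable X μ) {s t : ℝ} (hst : s ≤ t) :
    (∫ ω, max (s - X ω) 0 ∂μ) ≤ ∫ ω, max (t - X ω) 0 ∂μ := by
  have h2 : ∀ u : ℝ, Integrable (fun ω => max (u - X ω) 0) μ := by
    intro u
    have := int_pos_part μ (fun ω => -X ω) hX.neg (-u)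
    simpa [neg_sub, sub_eq_add_neg, add_comm] using this
  refine integral_mono (h2 s) (h2 t) ?_
  intro ω
  exact max_le_max (by linarith) le_rfl

private lemma expectile_unique {Ω : Type*} [MeasurableSpace Ω] (μ : Measure Ω)
    [IsProbabilityMeasure μ] (X : Ω → ℝ) (hX : Integrable X μ) (β : ℝ)
    (hβ : β ∈ Set.Ioo (0:ℝ) 1) (t₁ t₂ : ℝ)
    (h1 : β * ∫ ω, max (X ω - t₁) 0 ∂μ = (1-β) * ∫ ω, max (t₁ - X ω) 0 ∂μ)
    (h2 : β * ∫ ω, max (X ω - t₂) 0 ∂μ = (1-β) * ∫ ω, max (t₂ - X ω) 0 ∂μ) :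
    t₁ = t₂ := by
  obtain ⟨hβ0, hβ1⟩ := hβ
  have key : ∀ s t : ℝ, s < t →
      β * ∫ ω, max (X ω - s) 0 ∂μ = (1-β) * ∫ ω, max (s - X ω) 0 ∂μ →
      β * ∫ ω, max (X ω - t) 0 ∂μ = (1-β) * ∫ ω, max (t - X ω) 0 ∂μ → False := by
    intro s t hst hs ht
    have ih1 := key_identity μ X hX s
    have ih2 := key_identity μ X hX t
    have mh := pos_part_antitone μ X hX hst.le
    have mk := neg_part_monotone μ X hX hst.le
    set hs' := ∫ ω, max (X ω - s) 0 ∂μ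
    set ht' := ∫ ω, max (X ω - t) 0 ∂μ
    set ks' := ∫ ω, max (s - X ω) 0 ∂μ
    set kt' := ∫ ω, max (t - X ω) 0 ∂μ
    have e : β * (hs' - ht') = (1 - β) * (ks' - kt') := by ring_nf; linarith
    have b : (1 - β) * (ks' - kt') ≤ 0 :=
      mul_nonpos_of_nonneg_of_nonpos (by linarith) (by linarith)
    have a : 0 ≤ β * (hs' - ht') := mul_nonneg hβ0.le (by linarith)
    have e1 : β * (hs' - ht') = 0 := le_antisymm (e ▸ b) a
    have e2 : hs' - ht' = 0 := by
      rcases mul_eq_zero.mp e1 with h | h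
      · exact absurd h (ne_of_gt hβ0)
      · exact h
    have e3 : ks' - kt' = 0 := by
      have : (1 - β) * (ks' - kt') = 0 := by rw [← e, e1]
      rcases mul_eq_zero.mp this with h | h
      · exact absurd h (by intro hh; linarith)
      · exact h
    linarith
  rcases lt_trichotomy t₁ t₂ with h | h | h
  · exact absurd (key t₁ t₂ h h1 h2) id
  · exact h
  · exact absurd (key t₂ t₁ h h2 h1) id

private lemma sym_int {Ω : Type*} [MeasurableSpace Ω] (μ : Measure Ω)
    [IsProbabilityMeasure μ] (X : Ω → ℝ) (hm : Measurable X) (x₀ : ℝ)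
    (hsym : Measure.map (fun ω => X ω - x₀) μ = Measure.map (fun ω => x₀ - X ω) μ)
    (c : ℝ) :
    (∫ ω, max (X ω - c) 0 ∂μ) = ∫ ω, max ((2*x₀ - c) - X ω) 0 ∂μ := by
  have hmeas : Measurable (fun u : ℝ => max (u - (c - x₀)) 0) :=
    (measurable_id.sub_const _).max measurable_const
  calc (∫ ω, max (X ω - c) 0 ∂μ)
      = ∫ ω, (fun u : ℝ => max (u - (c - x₀)) 0) ((fun ω => X ω - x₀) ω) ∂μ := by
        congr 1 with ω; simp only; ring_nf
    _ = ∫ u, max (u - (c - x₀)) 0 ∂(Measure.map (fun ω => X ω - x₀) μ) :=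
        (integral_map (hm.sub_const x₀).aemeasurable hmeas.aestronglyMeasurable).symm
    _ = ∫ u, max (u - (c - x₀)) 0 ∂(Measure.map (fun ω => x₀ - X ω) μ) := by rw [hsym]
    _ = ∫ ω, (fun u : ℝ => max (u - (c - x₀)) 0) ((fun ω => x₀ - X ω) ω) ∂μ :=
        integral_map (measurable_const.sub hm).aemeasurable hmeas.aestronglyMeasurable
    _ = ∫ ω, max ((2*x₀ - c) - X ω) 0 ∂μ := by
        congr 1 with ω; simp only; ring_nf

theorem expectile_symmetric_distribution
    {Ω : Type*} [MeasurableSpace Ω] (μ : Measure Ω) [IsProbabilityMeasure μ]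
    (X : Ω → ℝ) (hX : MemLp X 2 μ) (hm : Measurable X) (x₀ : ℝ)
    (hsym : Measure.map (fun ω => X ω - x₀) μ = Measure.map (fun ω => x₀ - X ω) μ)
    (α : ℝ) (hα : α ∈ Set.Ioo (0:ℝ) 1) (x y : ℝ)
    (hx : α * ∫ ω, max (X ω - x) 0 ∂μ = (1-α) * ∫ ω, max (x - X ω) 0 ∂μ)
    (hy : (1-α) * ∫ ω, max (X ω - y) 0 ∂μ = (1-(1-α)) * ∫ ω, max (y - X ω) 0 ∂μ) :
    (x + y) / 2 = x₀ := by
  have hXi : Integrable X μ := hX.integrable one_le_two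
  obtain ⟨hα0, hα1⟩ := hα
  set y' := 2*x₀ - x with hy'def
  have s1 : (∫ ω, max (X ω - x) 0 ∂μ) = ∫ ω, max (y' - X ω) 0 ∂μ :=
    sym_int μ X hm x₀ hsym x
  have s2 : (∫ ω, max (X ω - y') 0 ∂μ) = ∫ ω, max (x - X ω) 0 ∂μ := by
    have := sym_int μ X hm x₀ hsym y'
    rwa [show 2*x₀ - y' = x by rw [hy'def]; ring] at this
  have hy2 : (1-α) * ∫ ω, max (X ω - y') 0 ∂μ
      = (1-(1-α)) * ∫ ω, max (y' - X ω) 0 ∂μ := by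
    rw [s2, ← s1, show (1:ℝ)-(1-α) = α by ring]
    linarith [hx]
  have : y = y' :=
    expectile_unique μ X hXi (1-α) ⟨by linarith, by linarith⟩ y y' hy hy2
  rw [this, hy'def]; ring
end

section
/- If X ≤ Y almost surely and P(X < Y) > 0, where X, Y are square-integrable random variables, then e_α(X) < e_α(Y) for every α ∈ (0,1) (strict stochastic monotonicity of expectiles). -/
open MeasureTheory

/-- Pointwise monotonicity in `v` of the expectile scoring difference. -/
lemma expectile_aux_mono {α t v w : ℝ} (hα0 : 0 < α) (hα1 : α < 1) (hvw : v ≤ w) :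
    α * max (v - t) 0 - (1 - α) * max (t - v) 0 + min α (1 - α) * (w - v) ≤
      α * max (w - t) 0 - (1 - α) * max (t - w) 0 := by
  rcases le_total v t with h1 | h1
  · rcases le_total w t with h2 | h2
    · rw [max_eq_right (by linarith : v - t ≤ 0), max_eq_left (by linarith : 0 ≤ t - v),
        max_eq_right (by linarith : w - t ≤ 0), max_eq_left (by linarith : 0 ≤ t - w)]
      nlinarith [mul_le_mul_of_nonneg_right (min_le_right α (1 - α))
        (by linarith : (0:ℝ) ≤ w - v)]
    · rw [max_eq_right (by linarith : v - t ≤ 0), max_eq_left (by linarith : 0 ≤ t - v),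
        max_eq_left (by linarith : (0:ℝ) ≤ w - t), max_eq_right (by linarith : t - w ≤ 0)]
      nlinarith [mul_le_mul_of_nonneg_right (min_le_left α (1 - α))
        (by linarith : (0:ℝ) ≤ w - t),
        mul_le_mul_of_nonneg_right (min_le_right α (1 - α))
        (by linarith : (0:ℝ) ≤ t - v)]
  · have h2 : t ≤ w := le_trans h1 hvw
    rw [max_eq_left (by linarith : (0:ℝ) ≤ v - t), max_eq_right (by linarith : t - v ≤ 0),
      max_eq_left (by linarith : (0:ℝ) ≤ w - t), max_eq_right (by linarith : t - w ≤ 0)]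
    nlinarith [mul_le_mul_of_nonneg_right (min_le_left α (1 - α))
      (by linarith : (0:ℝ) ≤ w - v)]

/-- Pointwise antitonicity in `t`. -/
lemma expectile_aux_anti {α t s v : ℝ} (hα0 : 0 < α) (hα1 : α < 1) (hts : t ≤ s) :
    α * max (v - s) 0 - (1 - α) * max (s - v) 0 ≤
      α * max (v - t) 0 - (1 - α) * max (t - v) 0 := by
  rcases le_total v t with h1 | h1
  · rw [max_eq_right (by linarith : v - s ≤ 0), max_eq_left (by linarith : 0 ≤ s - v),
      max_eq_right (by linarith : v - t ≤ 0), max_eq_left (by linarith : 0 ≤ t - v)]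
    nlinarith
  · rcases le_total v s with h2 | h2
    · rw [max_eq_right (by linarith : v - s ≤ 0), max_eq_left (by linarith : 0 ≤ s - v),
        max_eq_left (by linarith : (0:ℝ) ≤ v - t), max_eq_right (by linarith : t - v ≤ 0)]
      nlinarith
    · rw [max_eq_left (by linarith : (0:ℝ) ≤ v - s), max_eq_right (by linarith : s - v ≤ 0),
        max_eq_left (by linarith : (0:ℝ) ≤ v - t), max_eq_right (by linarith : t - v ≤ 0)]
      nlinarith

theorem expectile_strict_monotone
    {Ω : Type*} [MeasurableSpace Ω] (μ : Measure Ω) [IsProbabilityMeasure μ]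
    (X Y : Ω → ℝ) (hX : MemLp X 2 μ) (hY : MemLp Y 2 μ)
    (hle : ∀ᵐ ω ∂μ, X ω ≤ Y ω) (hlt : 0 < μ {ω | X ω < Y ω})
    (α : ℝ) (hα : α ∈ Set.Ioo (0:ℝ) 1) (x y : ℝ)
    (hx : α * ∫ ω, max (X ω - x) 0 ∂μ = (1-α) * ∫ ω, max (x - X ω) 0 ∂μ)
    (hy : α * ∫ ω, max (Y ω - y) 0 ∂μ = (1-α) * ∫ ω, max (y - Y ω) 0 ∂μ) :
    x < y := by
  obtain ⟨hα0, hα1⟩ := hα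
  have hm : 0 < min α (1 - α) := lt_min hα0 (by linarith)
  have intX : Integrable X μ := hX.integrable one_le_two
  have intY : Integrable Y μ := hY.integrable one_le_two
  -- integrability of the pieces
  have I1 : ∀ (Z : Ω → ℝ), Integrable Z μ → ∀ c : ℝ,
      Integrable (fun ω => max (Z ω - c) 0) μ := fun Z hZ c =>
    (hZ.sub (integrable_const c)).pos_part
  have I2 : ∀ (Z : Ω → ℝ), Integrable Z μ → ∀ c : ℝ,
      Integrable (fun ω => max (c - Z ω) 0) μ := fun Z hZ c =>
    ((integrable_const c).sub hZ).pos_part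
  set F : ℝ → ℝ → ℝ := fun c v => α * max (v - c) 0 - (1 - α) * max (c - v) 0 with hF
  have IF : ∀ (Z : Ω → ℝ), Integrable Z μ → ∀ c : ℝ,
      Integrable (fun ω => F c (Z ω)) μ := fun Z hZ c =>
    ((I1 Z hZ c).const_mul α).sub ((I2 Z hZ c).const_mul (1 - α))
  have intF : ∀ (Z : Ω → ℝ) (hZ : Integrable Z μ) (c : ℝ),
      ∫ ω, F c (Z ω) ∂μ =
        α * ∫ ω, max (Z ω - c) 0 ∂μ - (1 - α) * ∫ ω, max (c - Z ω) 0 ∂μ := by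
    intro Z hZ c
    rw [integral_sub ((I1 Z hZ c).const_mul α) ((I2 Z hZ c).const_mul (1 - α)),
      integral_const_mul, integral_const_mul]
  have hFx : ∫ ω, F x (X ω) ∂μ = 0 := by rw [intF X intX x, hx]; ring
  have hFy : ∫ ω, F y (Y ω) ∂μ = 0 := by rw [intF Y intY y, hy]; ring
  -- the difference function
  set h : Ω → ℝ := fun ω => F x (Y ω) - F x (X ω) with hh
  have hint : Integrable h μ := (IF Y intY x).sub (IF X intX x)
  have hnonneg : 0 ≤ᵐ[μ] h := by
    filter_upwards [hle] with ω hω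
    have h1 := expectile_aux_mono (t := x) hα0 hα1 hω
    have h2 : 0 ≤ min α (1 - α) * (Y ω - X ω) := mul_nonneg hm.le (sub_nonneg.mpr hω)
    simp only [hh, hF, Pi.zero_apply]
    linarith
  have hsupp : {ω | X ω < Y ω} ⊆ Function.support h := by
    intro ω hω
    have h1 := expectile_aux_mono (t := x) hα0 hα1 (le_of_lt hω)
    have h2 : 0 < min α (1 - α) * (Y ω - X ω) := mul_pos hm (sub_pos.mpr hω)
    intro h0
    simp only [hh, sub_eq_zero] at h0
    simp only [hF] at h1 h0
    nlinarith
  have hpos : 0 < ∫ ω, h ω ∂μ := by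
    rw [integral_pos_iff_support_of_nonneg_ae hnonneg hint]
    exact lt_of_lt_of_le hlt (measure_mono hsupp)
  have hFxY : 0 < ∫ ω, F x (Y ω) ∂μ := by
    have := integral_sub (IF Y intY x) (IF X intX x)
    simp only [hh] at hpos
    rw [this] at hpos
    linarith [hpos, hFx.le, hFx.ge]
  by_contra hxy
  push_neg at hxy
  have : ∫ ω, F x (Y ω) ∂μ ≤ ∫ ω, F y (Y ω) ∂μ := by
    apply integral_mono (IF Y intY x) (IF Y intY y)
    intro ω
    exact expectile_aux_anti hα0 hα1 hxy
  linarith [hFy ▸ this]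
end

section
/- For α ∈ [1/2, 1) and square-integrable random variables X, Y, the expectile is subadditive: e_α(X+Y) ≤ e_α(X) + e_α(Y). -/
open MeasureTheory

noncomputable def fE (α t : ℝ) : ℝ := α * max t 0 - (1-α) * max (-t) 0

lemma fE_nonneg {α t : ℝ} (h : 0 ≤ t) : fE α t = α * t := by
  unfold fE
  rw [max_eq_left h, max_eq_right (by linarith)]
  ring

lemma fE_nonpos {α t : ℝ} (h : t ≤ 0) : fE α t = (1-α) * t := by
  unfold fE
  rw [max_eq_right h, max_eq_left (by linarith)]
  ring

lemma fE_subadd {α : ℝ} (h1 : 1/2 ≤ α) (h2 : α ≤ 1) (u v : ℝ) :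
    fE α (u+v) ≤ fE α u + fE α v := by
  rcases le_total u 0 with hu | hu <;> rcases le_total v 0 with hv | hv <;>
    rcases le_total (u+v) 0 with huv | huv <;>
    simp only [fE_nonneg, fE_nonpos, *] <;> nlinarith

lemma fE_mono {α : ℝ} (h1 : 1/2 ≤ α) (h2 : α ≤ 1) {s d : ℝ} (hd : 0 ≤ d) :
    fE α s + (1-α) * d ≤ fE α (s+d) := by
  rcases le_total s 0 with hs | hs <;> rcases le_total (s+d) 0 with hsd | hsd <;>
    simp only [fE_nonneg, fE_nonpos, *] <;> nlinarith

theorem expectile_subadditive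
    {Ω : Type*} [MeasurableSpace Ω] (μ : Measure Ω) [IsProbabilityMeasure μ]
    (X Y : Ω → ℝ) (hX : MemLp X 2 μ) (hY : MemLp Y 2 μ)
    (α : ℝ) (hα : α ∈ Set.Ico (1/2 : ℝ) 1) (x y z : ℝ)
    (hx : α * ∫ ω, max (X ω - x) 0 ∂μ = (1-α) * ∫ ω, max (x - X ω) 0 ∂μ)
    (hy : α * ∫ ω, max (Y ω - y) 0 ∂μ = (1-α) * ∫ ω, max (y - Y ω) 0 ∂μ)
    (hz : α * ∫ ω, max ((X ω + Y ω) - z) 0 ∂μ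
        = (1-α) * ∫ ω, max (z - (X ω + Y ω)) 0 ∂μ) :
    z ≤ x + y := by
  obtain ⟨hα1, hα2⟩ := hα
  have hα2' : α ≤ 1 := le_of_lt hα2
  have hXi : Integrable X μ := hX.integrable (by norm_num)
  have hYi : Integrable Y μ := hY.integrable (by norm_num)
  -- integrability of fE α (g - c) for integrable g
  have key : ∀ (g : Ω → ℝ), Integrable g μ → ∀ c : ℝ,
      Integrable (fun ω => fE α (g ω - c)) μ ∧
      ∫ ω, fE α (g ω - c) ∂μ
        = α * ∫ ω, max (g ω - c) 0 ∂μ - (1-α) * ∫ ω, max (c - g ω) 0 ∂μ := by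
    intro g hg c
    have h1 : Integrable (fun ω => max (g ω - c) 0) μ :=
      (hg.sub (integrable_const c)).pos_part
    have h2 : Integrable (fun ω => max (c - g ω) 0) μ :=
      ((integrable_const c).sub hg).pos_part
    have heq : (fun ω => fE α (g ω - c))
        = fun ω => α * max (g ω - c) 0 - (1-α) * max (c - g ω) 0 := by
      funext ω; unfold fE; rw [neg_sub]
    refine ⟨?_, ?_⟩
    · rw [heq]; exact (h1.const_mul α).sub (h2.const_mul (1-α))
    · rw [heq, integral_sub (h1.const_mul α) (h2.const_mul (1-α)),
        integral_const_mul, integral_const_mul]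
  obtain ⟨hiX, heX⟩ := key X hXi x
  obtain ⟨hiY, heY⟩ := key Y hYi y
  obtain ⟨hiXY, heXY⟩ := key (fun ω => X ω + Y ω) (hXi.add hYi) (x+y)
  obtain ⟨hiZ, heZ⟩ := key (fun ω => X ω + Y ω) (hXi.add hYi) z
  have hGX : ∫ ω, fE α (X ω - x) ∂μ = 0 := by rw [heX]; linarith
  have hGY : ∫ ω, fE α (Y ω - y) ∂μ = 0 := by rw [heY]; linarith
  have hGZ : ∫ ω, fE α (X ω + Y ω - z) ∂μ = 0 := by rw [heZ]; linarith
  -- subadditivity: integral at x+y is ≤ 0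
  have hsub : ∫ ω, fE α (X ω + Y ω - (x+y)) ∂μ ≤ 0 := by
    have hle : ∫ ω, fE α (X ω + Y ω - (x+y)) ∂μ
        ≤ ∫ ω, (fE α (X ω - x) + fE α (Y ω - y)) ∂μ := by
      apply integral_mono hiXY (hiX.add hiY)
      intro ω
      simp only [Pi.add_apply]
      have : X ω + Y ω - (x+y) = (X ω - x) + (Y ω - y) := by ring
      rw [this]
      exact fE_subadd hα1 hα2' _ _
    rw [integral_add hiX hiY, hGX, hGY] at hle
    linarith
  -- monotonicity: compare z and x+y
  by_contra hcon
  push_neg at hcon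
  have hd : 0 ≤ z - (x+y) := by linarith
  have hmono : ∫ ω, (fE α (X ω + Y ω - z) + (1-α) * (z - (x+y))) ∂μ
      ≤ ∫ ω, fE α (X ω + Y ω - (x+y)) ∂μ := by
    apply integral_mono (hiZ.add (integrable_const _)) hiXY
    intro ω
    simp only [Pi.add_apply]
    have : X ω + Y ω - (x+y) = (X ω + Y ω - z) + (z - (x+y)) := by ring
    rw [this]
    exact fE_mono hα1 hα2' hd
  rw [integral_add hiZ (integrable_const _), hGZ, integral_const] at hmono
  simp [measure_univ] at hmono
  nlinarith
end

section
/- Pseudo-invariance under diagonal linear transformations: for b ∈ (0,∞)^d with V = diag(b) and a ∈ ℝ^d, e_α^Σ(VX + a) = V·e_α^{VΣV}(X) + a. -/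
open MeasureTheory Matrix


namespace SigmaExpAux

variable {d : ℕ}

lemma dot_mulVec_eq_sum (S : Matrix (Fin d) (Fin d) ℝ) (x y : Fin d → ℝ) :
    x ⬝ᵥ S.mulVec y = ∑ i, ∑ j, x i * S i j * y j := by
  simp [dotProduct, Matrix.mulVec, Finset.mul_sum, mul_assoc]

lemma q_nonneg {S : Matrix (Fin d) (Fin d) ℝ} (hS : S.PosSemidef) (x : Fin d → ℝ) :
    0 ≤ x ⬝ᵥ S.mulVec x := by
  simpa using hS.dotProduct_mulVec_nonneg x

lemma q_pos {S : Matrix (Fin d) (Fin d) ℝ} (hS : S.PosDef) {x : Fin d → ℝ} (hx : x ≠ 0) :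
    0 < x ⬝ᵥ S.mulVec x := by
  simpa using hS.dotProduct_mulVec_pos hx

lemma q_parallelogram (S : Matrix (Fin d) (Fin d) ℝ) (u v : Fin d → ℝ) :
    (fun i => (u i + v i)/2) ⬝ᵥ S.mulVec (fun i => (u i + v i)/2)
      + (fun i => (u i - v i)/2) ⬝ᵥ S.mulVec (fun i => (u i - v i)/2)
      = (u ⬝ᵥ S.mulVec u + v ⬝ᵥ S.mulVec v)/2 := by
  simp only [dot_mulVec_eq_sum, ← Finset.sum_add_distrib, Finset.sum_div]
  exact Finset.sum_congr rfl fun i _ => Finset.sum_congr rfl fun j _ => by ring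

lemma q_mono {S : Matrix (Fin d) (Fin d) ℝ} (hpos : ∀ i j, 0 ≤ S i j)
    {x y : Fin d → ℝ} (hx : ∀ i, 0 ≤ x i) (hxy : ∀ i, x i ≤ y i) :
    x ⬝ᵥ S.mulVec x ≤ y ⬝ᵥ S.mulVec y := by
  simp only [dot_mulVec_eq_sum]
  refine Finset.sum_le_sum fun i _ => Finset.sum_le_sum fun j _ => ?_
  have h1 : x i * S i j * x j ≤ y i * S i j * x j :=
    mul_le_mul_of_nonneg_right (mul_le_mul_of_nonneg_right (hxy i) (hpos i j)) (hx j)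
  have h2 : y i * S i j * x j ≤ y i * S i j * y j :=
    mul_le_mul_of_nonneg_left (hxy j) (mul_nonneg ((hx i).trans (hxy i)) (hpos i j))
  linarith


noncomputable def H (S : Matrix (Fin d) (Fin d) ℝ) (α : ℝ) (c x : Fin d → ℝ) : ℝ :=
  α * ((fun i => max (c i - x i) 0) ⬝ᵥ S.mulVec (fun i => max (c i - x i) 0))
  + (1-α) * ((fun i => max (x i - c i) 0) ⬝ᵥ S.mulVec (fun i => max (x i - c i) 0))

lemma scalar_half (s t : ℝ) : max ((s+t)/2) 0 ≤ (max s 0 + max t 0)/2 := by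
  have h1 := le_max_left s 0; have h2 := le_max_left t 0
  have h3 := le_max_right s 0; have h4 := le_max_right t 0
  exact max_le (by linarith) (by linarith)

lemma max_sub_max (t : ℝ) : max t 0 - max (-t) 0 = t := by
  rcases le_total t 0 with h|h
  · rw [max_eq_right h, max_eq_left (by linarith : (0:ℝ) ≤ -t)]; ring
  · rw [max_eq_left h, max_eq_right (by linarith : -t ≤ (0:ℝ))]; ring

lemma key_strict {S : Matrix (Fin d) (Fin d) ℝ} (hS : S.PosDef) (hpos : ∀ i j, 0 < S i j)
    {α : ℝ} (hα : α ∈ Set.Ioo (0:ℝ) 1) (c : Fin d → ℝ) {x y : Fin d → ℝ} (hxy : x ≠ y) :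
    H S α c (fun i => (x i + y i)/2) < (H S α c x + H S α c y)/2 := by
  obtain ⟨hα0, hα1⟩ := hα
  have hSnn : ∀ i j, 0 ≤ S i j := fun i j => (hpos i j).le
  set q : (Fin d → ℝ) → ℝ := fun z => z ⬝ᵥ S.mulVec z with hq
  set Nx : Fin d → ℝ := fun i => max (c i - x i) 0 with hNx
  set Ny : Fin d → ℝ := fun i => max (c i - y i) 0 with hNy
  set Px : Fin d → ℝ := fun i => max (x i - c i) 0 with hPx
  set Py : Fin d → ℝ := fun i => max (y i - c i) 0 with hPy
  set Nm : Fin d → ℝ := fun i => max (c i - (x i + y i)/2) 0 with hNm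
  set Pm : Fin d → ℝ := fun i => max ((x i + y i)/2 - c i) 0 with hPm
  set dN : Fin d → ℝ := fun i => (Nx i - Ny i)/2 with hdN
  set dP : Fin d → ℝ := fun i => (Px i - Py i)/2 with hdP
  have hN1 : q Nm ≤ q (fun i => (Nx i + Ny i)/2) := by
    refine q_mono hSnn (fun i => le_max_right _ _) (fun i => ?_)
    have e : c i - (x i + y i)/2 = ((c i - x i) + (c i - y i))/2 := by ring
    simpa [hNm, e] using scalar_half (c i - x i) (c i - y i)
  have hP1 : q Pm ≤ q (fun i => (Px i + Py i)/2) := by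
    refine q_mono hSnn (fun i => le_max_right _ _) (fun i => ?_)
    have e : (x i + y i)/2 - c i = ((x i - c i) + (y i - c i))/2 := by ring
    simpa [hPm, e] using scalar_half (x i - c i) (y i - c i)
  have hN2 : q (fun i => (Nx i + Ny i)/2) + q dN = (q Nx + q Ny)/2 :=
    q_parallelogram S Nx Ny
  have hP2 : q (fun i => (Px i + Py i)/2) + q dP = (q Px + q Py)/2 :=
    q_parallelogram S Px Py
  have hne : dN ≠ 0 ∨ dP ≠ 0 := by
    by_contra h
    push_neg at h
    obtain ⟨h1, h2⟩ := h
    apply hxy; funext i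
    have e1 : Nx i = Ny i := by
      have := congrFun h1 i; simp [hdN] at this; linarith
    have e2 : Px i = Py i := by
      have := congrFun h2 i; simp [hdP] at this; linarith
    have ex : x i - c i = Px i - Nx i := by
      rw [hPx, hNx]
      simp only []
      rw [show c i - x i = -(x i - c i) by ring]
      exact (max_sub_max (x i - c i)).symm
    have ey : y i - c i = Py i - Ny i := by
      rw [hPy, hNy]
      simp only []
      rw [show c i - y i = -(y i - c i) by ring]
      exact (max_sub_max (y i - c i)).symm
    have : x i - c i = y i - c i := by rw [ex, ey, e1, e2]
    linarith
  have hgap : 0 < α * q dN + (1-α) * q dP := by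
    have hdNnn := q_nonneg hS.posSemidef dN
    have hdPnn := q_nonneg hS.posSemidef dP
    rcases hne with h|h
    · have := q_pos hS h; nlinarith
    · have := q_pos hS h; nlinarith
  have e1 : H S α c (fun i => (x i + y i)/2) = α * q Nm + (1-α) * q Pm := by
    simp only [H, hq, hNm, hPm]
  have e2 : H S α c x = α * q Nx + (1-α) * q Px := by
    simp only [H, hq, hNx, hPx]
  have e3 : H S α c y = α * q Ny + (1-α) * q Py := by
    simp only [H, hq, hNy, hPy]
  rw [e1, e2, e3]
  have m1 : α * q Nm ≤ α * ((q Nx + q Ny)/2 - q dN) :=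
    mul_le_mul_of_nonneg_left (by linarith) hα0.le
  have m2 : (1-α) * q Pm ≤ (1-α) * ((q Px + q Py)/2 - q dP) :=
    mul_le_mul_of_nonneg_left (by linarith) (by linarith)
  nlinarith

end SigmaExpAux

namespace SigmaExpAux
variable {d : ℕ}

lemma integrable_quadform {Ω : Type*} [MeasurableSpace Ω] {μ : Measure Ω} [IsProbabilityMeasure μ]
    (S : Matrix (Fin d) (Fin d) ℝ) {X : Ω → Fin d → ℝ} (hm : Measurable X)
    (hint : ∀ i j, Integrable (fun ω => |X ω i * X ω j|) μ) (c1 c2 : Fin d → ℝ) :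
    Integrable (fun ω => (fun i => max (c1 i * X ω i + c2 i) 0) ⬝ᵥ
      S.mulVec (fun i => max (c1 i * X ω i + c2 i) 0)) μ := by
  have hmi : ∀ i, Measurable fun ω => X ω i := fun i => (measurable_pi_apply i).comp hm
  have hXi : ∀ i, Integrable (fun ω => |X ω i|) μ := by
    intro i
    refine Integrable.mono' ((integrable_const 1).add (hint i i)) (hmi i).abs.aestronglyMeasurable ?_
    filter_upwards with ω
    have h : |X ω i| ≤ 1 + |X ω i * X ω i| := by
      nlinarith [sq_nonneg (|X ω i| - 1), abs_mul_abs_self (X ω i), abs_nonneg (X ω i),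
        abs_nonneg (X ω i * X ω i), le_abs_self (X ω i * X ω i)]
    simpa [Real.norm_eq_abs, abs_abs] using h
  have hprod : ∀ i j, Integrable (fun ω => (1 + |X ω i|) * (1 + |X ω j|)) μ := by
    intro i j
    have e : (fun ω => (1 + |X ω i|) * (1 + |X ω j|))
        = fun ω => 1 + |X ω i| + |X ω j| + |X ω i * X ω j| := by
      funext ω; rw [abs_mul]; ring
    rw [e]
    exact (((integrable_const 1).add (hXi i)).add (hXi j)).add (hint i j)
  have e : (fun ω => (fun i => max (c1 i * X ω i + c2 i) 0) ⬝ᵥ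
        S.mulVec (fun i => max (c1 i * X ω i + c2 i) 0))
      = fun ω => ∑ i, ∑ j, (max (c1 i * X ω i + c2 i) 0) * S i j * (max (c1 j * X ω j + c2 j) 0) := by
    funext ω; exact dot_mulVec_eq_sum S _ _
  rw [e]
  refine integrable_finset_sum _ fun i _ => integrable_finset_sum _ fun j _ => ?_
  have hmax : ∀ (k : Fin d) ω, |max (c1 k * X ω k + c2 k) 0| ≤ (|c1 k| + |c2 k| + 1) * (1 + |X ω k|) := by
    intro k ω
    rw [abs_of_nonneg (le_max_right _ _)]
    refine max_le ?_ (by positivity)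
    have h1 : c1 k * X ω k ≤ |c1 k| * |X ω k| := (le_abs_self _).trans (le_of_eq (abs_mul _ _))
    have h2 : c2 k ≤ |c2 k| := le_abs_self _
    nlinarith [abs_nonneg (X ω k), abs_nonneg (c1 k), abs_nonneg (c2 k)]
  have hmeas : ∀ (k : Fin d), Measurable fun ω => max (c1 k * X ω k + c2 k) 0 :=
    fun k => (((hmi k).const_mul (c1 k)).add_const (c2 k)).max measurable_const
  refine Integrable.mono' ((hprod i j).const_mul ((|c1 i| + |c2 i| + 1) * (|c1 j| + |c2 j| + 1) * |S i j|))
    ((((hmeas i).mul measurable_const).mul (hmeas j)).aestronglyMeasurable) ?_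
  filter_upwards with ω
  have h1 := hmax i ω
  have h2 := hmax j ω
  rw [Real.norm_eq_abs, abs_mul, abs_mul]
  have h3 := mul_le_mul h1 h2 (abs_nonneg _) (by positivity)
  nlinarith [abs_nonneg (S i j), abs_nonneg (max (c1 i * X ω i + c2 i) 0),
    abs_nonneg (max (c1 j * X ω j + c2 j) 0),
    mul_le_mul_of_nonneg_left h3 (abs_nonneg (S i j))]

lemma integrable_H {Ω : Type*} [MeasurableSpace Ω] {μ : Measure Ω} [IsProbabilityMeasure μ]
    (S : Matrix (Fin d) (Fin d) ℝ) (α : ℝ) {X : Ω → Fin d → ℝ} (hm : Measurable X)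
    (hint : ∀ i j, Integrable (fun ω => |X ω i * X ω j|) μ) (b a x : Fin d → ℝ) :
    Integrable (fun ω => H S α (fun i => b i * X ω i + a i) x) μ := by
  have e : (fun ω => H S α (fun i => b i * X ω i + a i) x)
      = fun ω => α * ((fun i => max (b i * X ω i + (a i - x i)) 0) ⬝ᵥ
            S.mulVec (fun i => max (b i * X ω i + (a i - x i)) 0))
        + (1-α) * ((fun i => max ((-b i) * X ω i + (x i - a i)) 0) ⬝ᵥ
            S.mulVec (fun i => max ((-b i) * X ω i + (x i - a i)) 0)) := by
    funext ω
    have f1 : (fun i => max ((fun i => b i * X ω i + a i) i - x i) 0)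
        = fun i => max (b i * X ω i + (a i - x i)) 0 := by
      funext i; congr 1; ring
    have f2 : (fun i => max (x i - (fun i => b i * X ω i + a i) i) 0)
        = fun i => max ((-b i) * X ω i + (x i - a i)) 0 := by
      funext i; congr 1; ring
    simp only [H]
    rw [f1, f2]
  rw [e]
  exact ((integrable_quadform S hm hint b (fun i => a i - x i)).const_mul α).add
    ((integrable_quadform S hm hint (fun i => -b i) (fun i => x i - a i)).const_mul (1-α))

lemma scale_dot (S : Matrix (Fin d) (Fin d) ℝ) (b u : Fin d → ℝ) :
    (fun i => b i * u i) ⬝ᵥ S.mulVec (fun i => b i * u i)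
      = u ⬝ᵥ ((Matrix.diagonal b * S * Matrix.diagonal b).mulVec u) := by
  simp only [dot_mulVec_eq_sum]
  refine Finset.sum_congr rfl fun i _ => Finset.sum_congr rfl fun j _ => ?_
  rw [Matrix.mul_diagonal, Matrix.diagonal_mul]
  ring

lemma cov (S : Matrix (Fin d) (Fin d) ℝ) (α : ℝ) (b a : Fin d → ℝ) (hb : ∀ i, 0 < b i)
    (Y z : Fin d → ℝ) :
    H S α (fun i => b i * Y i + a i) (fun i => b i * z i + a i)
      = α * ((fun i => max (Y i - z i) 0) ⬝ᵥ
            ((Matrix.diagonal b * S * Matrix.diagonal b).mulVec (fun i => max (Y i - z i) 0)))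
      + (1-α) * ((fun i => max (z i - Y i) 0) ⬝ᵥ
            ((Matrix.diagonal b * S * Matrix.diagonal b).mulVec (fun i => max (z i - Y i) 0))) := by
  have eN : (fun i => max ((b i * Y i + a i) - (b i * z i + a i)) 0)
      = fun i => b i * max (Y i - z i) 0 := by
    funext i
    rw [show (b i * Y i + a i) - (b i * z i + a i) = b i * (Y i - z i) by ring,
      mul_max_of_nonneg _ _ (hb i).le, mul_zero]
  have eP : (fun i => max ((b i * z i + a i) - (b i * Y i + a i)) 0)
      = fun i => b i * max (z i - Y i) 0 := by
    funext i
    rw [show (b i * z i + a i) - (b i * Y i + a i) = b i * (z i - Y i) by ring,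
      mul_max_of_nonneg _ _ (hb i).le, mul_zero]
  simp only [H]
  rw [eN, eP, scale_dot, scale_dot]

end SigmaExpAux

open SigmaExpAux

theorem sigma_expectile_diagonal_pseudo_invariance
    {Ω : Type*} [MeasurableSpace Ω] (μ : Measure Ω) [IsProbabilityMeasure μ]
    {d : ℕ} (S : Matrix (Fin d) (Fin d) ℝ) (hS : S.PosDef) (hpos : ∀ i j, 0 < S i j)
    (X : Ω → Fin d → ℝ) (hm : Measurable X)
    (hint : ∀ i j, Integrable (fun ω => |X ω i * X ω j|) μ)
    (α : ℝ) (hα : α ∈ Set.Ioo (0:ℝ) 1)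
    (b : Fin d → ℝ) (hb : ∀ i, 0 < b i) (a : Fin d → ℝ)
    (eV eX : Fin d → ℝ)
    -- eV is the Σ-expectile of V X + a, where V = diag(b)
    (heV : IsMinOn
      (fun x : Fin d → ℝ => ∫ ω,
        α * ((fun i => max ((b i * X ω i + a i) - x i) 0) ⬝ᵥ
              S.mulVec (fun i => max ((b i * X ω i + a i) - x i) 0))
        + (1-α) * ((fun i => max (x i - (b i * X ω i + a i)) 0) ⬝ᵥ
              S.mulVec (fun i => max (x i - (b i * X ω i + a i)) 0)) ∂μ)
      Set.univ eV)
    -- eX is the (VΣV)-expectile of X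
    (heX : IsMinOn
      (fun x : Fin d → ℝ => ∫ ω,
        α * ((fun i => max (X ω i - x i) 0) ⬝ᵥ
              ((Matrix.diagonal b * S * Matrix.diagonal b).mulVec
                (fun i => max (X ω i - x i) 0)))
        + (1-α) * ((fun i => max (x i - X ω i) 0) ⬝ᵥ
              ((Matrix.diagonal b * S * Matrix.diagonal b).mulVec
                (fun i => max (x i - X ω i) 0))) ∂μ)
      Set.univ eX) :
    eV = fun i => b i * eX i + a i := by
  classical
  set F : (Fin d → ℝ) → ℝ :=
    fun x => ∫ ω, H S α (fun i => b i * X ω i + a i) x ∂μ with hF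
  set G : (Fin d → ℝ) → ℝ :=
    fun x : Fin d → ℝ => ∫ ω,
        α * ((fun i => max (X ω i - x i) 0) ⬝ᵥ
              ((Matrix.diagonal b * S * Matrix.diagonal b).mulVec
                (fun i => max (X ω i - x i) 0)))
        + (1-α) * ((fun i => max (x i - X ω i) 0) ⬝ᵥ
              ((Matrix.diagonal b * S * Matrix.diagonal b).mulVec
                (fun i => max (x i - X ω i) 0))) ∂μ with hG
  have heV' : IsMinOn F Set.univ eV := heV
  have heX' : IsMinOn G Set.univ eX := heX
  set w : Fin d → ℝ := fun i => b i * eX i + a i with hw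
  have hcov : ∀ z : Fin d → ℝ, F (fun i => b i * z i + a i) = G z := by
    intro z
    simp only [hF, hG]
    congr 1
    funext ω
    exact cov S α b a hb (X ω) z
  have hminF_w : ∀ x : Fin d → ℝ, F w ≤ F x := by
    intro xx
    have hz : xx = fun i => b i * ((xx i - a i) / b i) + a i := by
      funext i
      rw [mul_comm (b i), div_mul_cancel₀ _ (hb i).ne']
      ring
    calc F w = G eX := hcov eX
      _ ≤ G (fun i => (xx i - a i) / b i) :=
          isMinOn_iff.mp heX' _ (Set.mem_univ _)
      _ = F xx := by rw [← hcov, ← hz]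
  have hInt : ∀ x : Fin d → ℝ,
      Integrable (fun ω => H S α (fun i => b i * X ω i + a i) x) μ :=
    fun x => integrable_H S α hm hint b a x
  by_contra hne
  have hxy : eV ≠ w := hne
  set m : Fin d → ℝ := fun i => (eV i + w i)/2 with hm2
  have hkey : ∀ ω, H S α (fun i => b i * X ω i + a i) m
      < (H S α (fun i => b i * X ω i + a i) eV + H S α (fun i => b i * X ω i + a i) w)/2 :=
    fun ω => key_strict hS hpos hα _ hxy
  set Δ : Ω → ℝ := fun ω =>
    (H S α (fun i => b i * X ω i + a i) eV + H S α (fun i => b i * X ω i + a i) w)/2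
      - H S α (fun i => b i * X ω i + a i) m with hΔ
  have hΔint : Integrable Δ μ := (((hInt eV).add (hInt w)).div_const 2).sub (hInt m)
  have hΔpos : ∀ ω, 0 < Δ ω := fun ω => by
    have := hkey ω; simp only [hΔ]; linarith
  have hIpos : 0 < ∫ ω, Δ ω ∂μ := by
    rw [integral_pos_iff_support_of_nonneg (fun ω => (hΔpos ω).le) hΔint]
    have hsupp : Function.support Δ = Set.univ :=
      Set.eq_univ_of_forall fun ω => (hΔpos ω).ne'
    rw [hsupp]
    simp
  have hΔval : ∫ ω, Δ ω ∂μ = (F eV + F w)/2 - F m := by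
    have hIa : Integrable (fun ω =>
        (H S α (fun i => b i * X ω i + a i) eV + H S α (fun i => b i * X ω i + a i) w)/2) μ :=
      ((hInt eV).add (hInt w)).div_const 2
    have hIb : Integrable (fun ω =>
        H S α (fun i => b i * X ω i + a i) eV + H S α (fun i => b i * X ω i + a i) w) μ :=
      (hInt eV).add (hInt w)
    simp only [hΔ, hF]
    rw [integral_sub hIa (hInt m), integral_div, integral_add (hInt eV) (hInt w)]
  have h1 : F eV ≤ F m := isMinOn_iff.mp heV' m (Set.mem_univ _)
  have h2 : F w ≤ F eV := hminF_w eV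
  have h3 : F eV ≤ F w := isMinOn_iff.mp heV' w (Set.mem_univ _)
  rw [hΔval] at hIpos
  linarith
end

section
/- If there exists i such that π_{ij} = 0 for all j ≠ i (with π_{ii} > 0), then the i-th coordinate of the Σ-expectile e_α^Σ(X) equals the univariate expectile e_α(X_i). -/
open MeasureTheory Matrix

lemma aux_sq_max_le (a s : ℝ) :
    (max (a - s) 0)^2 ≤ (max a 0)^2 - 2*s*(max a 0) + s^2 := by
  rcases le_total (a-s) 0 with h2|h2
  · rw [max_eq_right h2]
    rcases le_total a 0 with h|h
    · rw [max_eq_right h]; nlinarith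
    · rw [max_eq_left h]; nlinarith
  · rw [max_eq_left h2]
    rcases le_total a 0 with h|h
    · rw [max_eq_right h]; nlinarith
    · rw [max_eq_left h]; nlinarith

lemma aux_max_half (a : ℝ) : max a 0 = (a + |a|)/2 := by
  rcases le_total a 0 with h|h
  · rw [max_eq_right h, abs_of_nonpos h]; ring
  · rw [max_eq_left h, abs_of_nonneg h]; ring

lemma aux_sum_AB (t t' x : ℝ) :
    (max (x - t) 0 - max (x - t') 0) + (max (t' - x) 0 - max (t - x) 0) = t' - t := by
  simp only [aux_max_half]
  rw [abs_sub_comm t' x, abs_sub_comm t x]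
  ring

lemma quad_decomp {d : ℕ} (S : Matrix (Fin d) (Fin d) ℝ) (hsym : ∀ j k, S j k = S k j)
    (i : Fin d) (hzero : ∀ j, j ≠ i → S i j = 0)
    (u u' : Fin d → ℝ) (hu : ∀ k, k ≠ i → u k = u' k) :
    u ⬝ᵥ S.mulVec u - u' ⬝ᵥ S.mulVec u' = S i i * (u i^2 - u' i^2) := by
  have key : ∀ w : Fin d → ℝ, w ⬝ᵥ S.mulVec w
      = S i i * w i ^ 2 + ∑ j ∈ Finset.univ.erase i, w j *
          ∑ k ∈ Finset.univ.erase i, S j k * w k := by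
    intro w
    rw [dotProduct, ← Finset.add_sum_erase _ _ (Finset.mem_univ i)]
    congr 1
    · have h1 : S.mulVec w i = S i i * w i := by
        rw [mulVec, dotProduct]
        exact Finset.sum_eq_single i (fun k _ hk => by rw [hzero k hk, zero_mul])
          (fun h => absurd (Finset.mem_univ i) h)
      rw [h1]; ring
    · apply Finset.sum_congr rfl
      intro j hj
      congr 1
      rw [mulVec, dotProduct, ← Finset.add_sum_erase _ _ (Finset.mem_univ i)]
      have : S j i = 0 := by rw [hsym]; exact hzero j (Finset.mem_erase.1 hj).1
      rw [this, zero_mul, zero_add]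
  rw [key u, key u']
  have hsum : ∑ j ∈ Finset.univ.erase i, u j * ∑ k ∈ Finset.univ.erase i, S j k * u k
      = ∑ j ∈ Finset.univ.erase i, u' j * ∑ k ∈ Finset.univ.erase i, S j k * u' k := by
    apply Finset.sum_congr rfl
    intro j hj
    rw [hu j (Finset.mem_erase.1 hj).1]
    congr 1
    exact Finset.sum_congr rfl fun k hk => by rw [hu k (Finset.mem_erase.1 hk).1]
  rw [hsum]; ring

lemma L2_mul_integrable {Ω : Type*} [MeasurableSpace Ω] {μ : Measure Ω}
    {f g : Ω → ℝ} (hf : MemLp f 2 μ) (hg : MemLp g 2 μ) :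
    Integrable (fun ω => f ω * g ω) μ := by
  have h : MemLp (f • g) 1 μ :=
    hg.smul (r := 1) hf
  have h2 := memLp_one_iff_integrable.1 h
  exact h2

lemma memℒp_max0 {Ω : Type*} [MeasurableSpace Ω] {μ : Measure Ω}
    {f : Ω → ℝ} (hf : MemLp f 2 μ) : MemLp (fun ω => max (f ω) 0) 2 μ := by
  refine MemLp.of_le hf (hf.1.sup aestronglyMeasurable_const) ?_
  filter_upwards with ω
  simp only [Real.norm_eq_abs]
  rcases le_total (f ω) 0 with h|h
  · rw [max_eq_right h]; simp [abs_nonneg]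
  · rw [max_eq_left h]

lemma aux_D_zero {D : ℝ} (h : ∀ s : ℝ, 0 ≤ s * D + s^2) : D = 0 := by
  have h1 := h (-D/2)
  have h2 : D^2 ≤ 0 := by nlinarith
  exact pow_eq_zero_iff two_ne_zero |>.1 (le_antisymm h2 (sq_nonneg D))

theorem sigma_expectile_independence_coordinate
    {Ω : Type*} [MeasurableSpace Ω] (μ : Measure Ω) [IsProbabilityMeasure μ]
    {d : ℕ} (S : Matrix (Fin d) (Fin d) ℝ) (hS : S.PosSemidef) (hpos : ∀ i j, 0 ≤ S i j)
    (hdiag : ∀ i, 0 < S i i)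
    (X : Ω → Fin d → ℝ) (hm : Measurable X)
    (hint : ∀ i j, Integrable (fun ω => |X ω i * X ω j|) μ)
    (α : ℝ) (hα : α ∈ Set.Ioo (0:ℝ) 1)
    (i : Fin d) (hzero : ∀ j, j ≠ i → S i j = 0)
    (e : Fin d → ℝ)
    (he : IsMinOn
      (fun x : Fin d → ℝ => ∫ ω,
        α * ((fun k => max (X ω k - x k) 0) ⬝ᵥ S.mulVec (fun k => max (X ω k - x k) 0))
        + (1-α) * ((fun k => max (x k - X ω k) 0) ⬝ᵥ
              S.mulVec (fun k => max (x k - X ω k) 0)) ∂μ)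
      Set.univ e)
    (ei : ℝ)
    (hei : α * ∫ ω, max (X ω i - ei) 0 ∂μ = (1-α) * ∫ ω, max (ei - X ω i) 0 ∂μ) :
    e i = ei := by
  obtain ⟨hα0, hα1⟩ := hα
  have hα1' : (0:ℝ) ≤ 1 - α := by linarith
  have hsym : ∀ j k, S j k = S k j := by
    intro j k
    have h : S k j = S j k := by simpa using hS.1.apply j k
    exact h.symm
  have hXm : ∀ j, Measurable (fun ω => X ω j) := fun j => (measurable_pi_apply j).comp hm
  have hX2 : ∀ j, MemLp (fun ω => X ω j) 2 μ := by
    intro j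
    rw [memLp_two_iff_integrable_sq (hXm j).aestronglyMeasurable]
    refine (hint j j).congr (Filter.Eventually.of_forall fun ω => ?_)
    show |X ω j * X ω j| = X ω j ^ 2
    rw [abs_mul_self, pow_two]
  have hu2 : ∀ (j : Fin d) (t : ℝ), MemLp (fun ω => max (X ω j - t) 0) 2 μ :=
    fun j t => memℒp_max0 ((hX2 j).sub (memLp_const t))
  have hv2 : ∀ (j : Fin d) (t : ℝ), MemLp (fun ω => max (t - X ω j) 0) 2 μ :=
    fun j t => memℒp_max0 ((memLp_const t).sub (hX2 j))
  have hu1 : ∀ (j : Fin d) (t : ℝ), Integrable (fun ω => max (X ω j - t) 0) μ :=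
    fun j t => (hu2 j t).integrable one_le_two
  have hv1 : ∀ (j : Fin d) (t : ℝ), Integrable (fun ω => max (t - X ω j) 0) μ :=
    fun j t => (hv2 j t).integrable one_le_two
  have hdotint : ∀ (f : Ω → Fin d → ℝ), (∀ k, MemLp (fun ω => f ω k) 2 μ) →
      Integrable (fun ω => f ω ⬝ᵥ S.mulVec (f ω)) μ := by
    intro f hf
    have hrw : (fun ω => f ω ⬝ᵥ S.mulVec (f ω))
        = fun ω => ∑ j, ∑ k, S j k * (f ω j * f ω k) := by
      funext ω
      simp only [dotProduct, mulVec, Finset.mul_sum]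
      exact Finset.sum_congr rfl fun j _ => Finset.sum_congr rfl fun k _ => by ring
    rw [hrw]
    apply integrable_finset_sum
    intro j _
    apply integrable_finset_sum
    intro k _
    exact (L2_mul_integrable (hf j) (hf k)).const_mul _
  have hFint : ∀ x : Fin d → ℝ, Integrable (fun ω =>
      α * ((fun k => max (X ω k - x k) 0) ⬝ᵥ S.mulVec (fun k => max (X ω k - x k) 0))
      + (1-α) * ((fun k => max (x k - X ω k) 0) ⬝ᵥ
          S.mulVec (fun k => max (x k - X ω k) 0))) μ := by
    intro x
    exact ((hdotint _ (fun k => hu2 k (x k))).const_mul α).add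
      ((hdotint _ (fun k => hv2 k (x k))).const_mul (1-α))
  have hφint : ∀ t : ℝ, Integrable (fun ω =>
      α * (max (X ω i - t) 0)^2 + (1-α) * (max (t - X ω i) 0)^2) μ :=
    fun t => (((hu2 i t).integrable_sq).const_mul α).add
      (((hv2 i t).integrable_sq).const_mul (1-α))
  have hmin := isMinOn_iff.1 he
  -- Key step 1: the i-th coordinate minimizes the univariate quadratic score
  have hkey : ∀ t : ℝ,
      (∫ ω, α * (max (X ω i - e i) 0)^2 + (1-α) * (max (e i - X ω i) 0)^2 ∂μ)
      ≤ ∫ ω, α * (max (X ω i - t) 0)^2 + (1-α) * (max (t - X ω i) 0)^2 ∂μ := by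
    intro t
    have hpt : (fun ω =>
        α * ((fun k => max (X ω k - Function.update e i t k) 0) ⬝ᵥ
              S.mulVec (fun k => max (X ω k - Function.update e i t k) 0))
        + (1-α) * ((fun k => max (Function.update e i t k - X ω k) 0) ⬝ᵥ
              S.mulVec (fun k => max (Function.update e i t k - X ω k) 0)))
        = fun ω =>
        (α * ((fun k => max (X ω k - e k) 0) ⬝ᵥ S.mulVec (fun k => max (X ω k - e k) 0))
         + (1-α) * ((fun k => max (e k - X ω k) 0) ⬝ᵥ
              S.mulVec (fun k => max (e k - X ω k) 0)))
        + S i i * ((α * (max (X ω i - t) 0)^2 + (1-α) * (max (t - X ω i) 0)^2)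
                 - (α * (max (X ω i - e i) 0)^2 + (1-α) * (max (e i - X ω i) 0)^2)) := by
      funext ω
      have h1 := quad_decomp S hsym i hzero
        (fun k => max (X ω k - Function.update e i t k) 0)
        (fun k => max (X ω k - e k) 0)
        (fun k hk => by simp only [Function.update_of_ne hk])
      have h2 := quad_decomp S hsym i hzero
        (fun k => max (Function.update e i t k - X ω k) 0)
        (fun k => max (e k - X ω k) 0)
        (fun k hk => by simp only [Function.update_of_ne hk])
      simp only [Function.update_self] at h1 h2
      linear_combination α * h1 + (1-α) * h2
    have hsubint : Integrable (fun ω =>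
        S i i * ((α * (max (X ω i - t) 0)^2 + (1-α) * (max (t - X ω i) 0)^2)
               - (α * (max (X ω i - e i) 0)^2 + (1-α) * (max (e i - X ω i) 0)^2))) μ :=
      ((hφint t).sub (hφint (e i))).const_mul _
    have hle : (∫ ω,
        α * ((fun k => max (X ω k - e k) 0) ⬝ᵥ S.mulVec (fun k => max (X ω k - e k) 0))
        + (1-α) * ((fun k => max (e k - X ω k) 0) ⬝ᵥ
              S.mulVec (fun k => max (e k - X ω k) 0)) ∂μ)
        ≤ ∫ ω,
        α * ((fun k => max (X ω k - Function.update e i t k) 0) ⬝ᵥ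
              S.mulVec (fun k => max (X ω k - Function.update e i t k) 0))
        + (1-α) * ((fun k => max (Function.update e i t k - X ω k) 0) ⬝ᵥ
              S.mulVec (fun k => max (Function.update e i t k - X ω k) 0)) ∂μ :=
      hmin (Function.update e i t) (Set.mem_univ _)
    rw [hpt, integral_add (hFint e) hsubint, integral_const_mul,
      integral_sub (hφint t) (hφint (e i))] at hle
    nlinarith [hle, hdiag i]
  -- Key step 2: first-order condition
  have hDint : Integrable
      (fun ω => -2*α * max (X ω i - e i) 0 + 2*(1-α) * max (e i - X ω i) 0) μ :=
    ((hu1 i (e i)).const_mul _).add ((hv1 i (e i)).const_mul _)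
  have hD : (∫ ω, -2*α * max (X ω i - e i) 0 + 2*(1-α)*max (e i - X ω i) 0 ∂μ)
      = -2*α*(∫ ω, max (X ω i - e i) 0 ∂μ) + 2*(1-α)*(∫ ω, max (e i - X ω i) 0 ∂μ) := by
    rw [integral_add ((hu1 i (e i)).const_mul _) ((hv1 i (e i)).const_mul _),
      integral_const_mul, integral_const_mul]
  have hstep : ∀ s : ℝ, 0 ≤ s * (-2*α*(∫ ω, max (X ω i - e i) 0 ∂μ)
      + 2*(1-α)*(∫ ω, max (e i - X ω i) 0 ∂μ)) + s^2 := by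
    intro s
    have hpt2 : ∀ ω, α * (max (X ω i - (e i + s)) 0)^2 + (1-α)*(max ((e i + s) - X ω i) 0)^2
        ≤ (α * (max (X ω i - e i) 0)^2 + (1-α)*(max (e i - X ω i) 0)^2)
          + (s * (-2*α * max (X ω i - e i) 0 + 2*(1-α)*max (e i - X ω i) 0) + s^2) := by
      intro ω
      have e1 : X ω i - (e i + s) = (X ω i - e i) - s := by ring
      have e2 : (e i + s) - X ω i = (e i - X ω i) - (-s) := by ring
      rw [e1, e2]
      have h1 := aux_sq_max_le (X ω i - e i) s
      have h2 := aux_sq_max_le (e i - X ω i) (-s)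
      nlinarith [mul_le_mul_of_nonneg_left h1 hα0.le, mul_le_mul_of_nonneg_left h2 hα1']
    have htail : Integrable (fun ω =>
        s * (-2*α * max (X ω i - e i) 0 + 2*(1-α)*max (e i - X ω i) 0) + s^2) μ :=
      (hDint.const_mul s).add (integrable_const _)
    have hint2 : Integrable (fun ω =>
        (α * (max (X ω i - e i) 0)^2 + (1-α)*(max (e i - X ω i) 0)^2)
        + (s * (-2*α * max (X ω i - e i) 0 + 2*(1-α)*max (e i - X ω i) 0) + s^2)) μ :=
      (hφint (e i)).add htail
    have hmono := integral_mono (hφint (e i + s)) hint2 hpt2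
    rw [integral_add (hφint (e i)) htail,
      integral_add (hDint.const_mul s) (integrable_const _),
      integral_const_mul, hD, integral_const] at hmono
    simp only [probReal_univ, measure_univ, ENNReal.toReal_one, smul_eq_mul, one_mul] at hmono
    have hk := hkey (e i + s)
    linarith
  have hGc : α * (∫ ω, max (X ω i - e i) 0 ∂μ)
      = (1-α) * (∫ ω, max (e i - X ω i) 0 ∂μ) := by
    have hD0 := aux_D_zero hstep
    linarith
  -- Key step 3: strict monotonicity of the identification function
  have hGmono : ∀ t t' : ℝ, t < t' →
      α * (∫ ω, max (X ω i - t') 0 ∂μ) - (1-α) * (∫ ω, max (t' - X ω i) 0 ∂μ)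
      < α * (∫ ω, max (X ω i - t) 0 ∂μ) - (1-α) * (∫ ω, max (t - X ω i) 0 ∂μ) := by
    intro t t' htt
    have hm0 : 0 < min α (1-α) := lt_min hα0 (by linarith)
    have hptm : ∀ ω, min α (1-α) * (t' - t) ≤
        α * (max (X ω i - t) 0 - max (X ω i - t') 0)
        + (1-α) * (max (t' - X ω i) 0 - max (t - X ω i) 0) := by
      intro ω
      have hAB := aux_sum_AB t t' (X ω i)
      have hA0 : 0 ≤ max (X ω i - t) 0 - max (X ω i - t') 0 :=
        sub_nonneg.2 (max_le_max (by linarith) le_rfl)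
      have hB0 : 0 ≤ max (t' - X ω i) 0 - max (t - X ω i) 0 :=
        sub_nonneg.2 (max_le_max (by linarith) le_rfl)
      have h1 : min α (1-α) ≤ α := min_le_left _ _
      have h2 : min α (1-α) ≤ 1-α := min_le_right _ _
      have hsum : min α (1-α) * ((max (X ω i - t) 0 - max (X ω i - t') 0)
          + (max (t' - X ω i) 0 - max (t - X ω i) 0)) = min α (1-α) * (t'-t) := by
        rw [hAB]
      nlinarith [mul_le_mul_of_nonneg_right h1 hA0, mul_le_mul_of_nonneg_right h2 hB0]
    have hA : Integrable (fun ω => max (X ω i - t) 0 - max (X ω i - t') 0) μ :=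
      (hu1 i t).sub (hu1 i t')
    have hB : Integrable (fun ω => max (t' - X ω i) 0 - max (t - X ω i) 0) μ :=
      (hv1 i t').sub (hv1 i t)
    have hintR : Integrable (fun ω =>
        α * (max (X ω i - t) 0 - max (X ω i - t') 0)
        + (1-α) * (max (t' - X ω i) 0 - max (t - X ω i) 0)) μ :=
      (hA.const_mul α).add (hB.const_mul (1-α))
    have hmono := integral_mono (integrable_const (min α (1-α) * (t'-t))) hintR hptm
    rw [integral_const, integral_add (hA.const_mul α) (hB.const_mul (1-α)),
      integral_const_mul, integral_const_mul,
      integral_sub (hu1 i t) (hu1 i t'), integral_sub (hv1 i t') (hv1 i t)] at hmono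
    simp only [probReal_univ, measure_univ, ENNReal.toReal_one, smul_eq_mul, one_mul] at hmono
    nlinarith [mul_pos hm0 (sub_pos.2 htt)]
  rcases lt_trichotomy (e i) ei with h|h|h
  · have := hGmono (e i) ei h
    linarith
  · exact h
  · have := hGmono ei (e i) h
    linarith
end

section
/- Support stability: for every k ∈ {1,…,d}, the k-th coordinate of the Σ-expectile satisfies essInf(X_k) ≤ e_α^Σ(X)_k ≤ essSup(X_k). -/
open MeasureTheory Matrix

lemma quad_step {d : ℕ} (S : Matrix (Fin d) (Fin d) ℝ) (hpos : ∀ i j, 0 < S i j)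
    (k : Fin d) (t : ℝ) (ht : 0 ≤ t) (u' : Fin d → ℝ) (hu' : ∀ j, 0 ≤ u' j) :
    u' ⬝ᵥ S *ᵥ u' + S k k * t ^ 2 ≤
      (u' + Pi.single k t) ⬝ᵥ S *ᵥ (u' + Pi.single k t) := by
  have h1 : (u' + Pi.single k t) ⬝ᵥ S *ᵥ (u' + Pi.single k t)
      = u' ⬝ᵥ S *ᵥ u' + u' ⬝ᵥ S *ᵥ Pi.single k t + Pi.single k t ⬝ᵥ S *ᵥ u'
        + Pi.single k t ⬝ᵥ S *ᵥ Pi.single k t := by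
    rw [add_dotProduct, Matrix.mulVec_add, dotProduct_add,
      dotProduct_add]
    ring
  have h2 : (0:ℝ) ≤ u' ⬝ᵥ S *ᵥ Pi.single k t := by
    rw [Matrix.mulVec_single]
    refine Finset.sum_nonneg fun i _ => ?_
    exact mul_nonneg (hu' i) (mul_nonneg (hpos i k).le ht)
  have h3 : (0:ℝ) ≤ Pi.single k t ⬝ᵥ S *ᵥ u' := by
    rw [single_dotProduct]
    simp only [Matrix.mulVec, dotProduct]
    refine mul_nonneg ht ?_
    exact Finset.sum_nonneg fun j _ => mul_nonneg (hpos k j).le (hu' j)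
  have h4 : Pi.single k t ⬝ᵥ S *ᵥ Pi.single k t = S k k * t ^ 2 := by
    rw [Matrix.mulVec_single, single_dotProduct]
    simp only [Pi.smul_apply, op_smul_eq_mul, Matrix.col_apply]
    ring
  linarith [h1, h2, h3, h4]

lemma quad_integrable {Ω : Type*} [MeasurableSpace Ω] (μ : Measure Ω) [IsProbabilityMeasure μ]
    {d : ℕ} (S : Matrix (Fin d) (Fin d) ℝ)
    (X : Ω → Fin d → ℝ) (hm : Measurable X)
    (hint : ∀ i j, Integrable (fun ω => |X ω i * X ω j|) μ)
    (x : Fin d → ℝ) (Y : Ω → Fin d → ℝ)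
    (hYm : ∀ i, Measurable fun ω => Y ω i)
    (hYb : ∀ ω i, |Y ω i| ≤ |X ω i| + |x i|) :
    Integrable (fun ω => Y ω ⬝ᵥ S *ᵥ Y ω) μ := by
  have hXi : ∀ i, Integrable (fun ω => |X ω i|) μ := by
    intro i
    refine ((integrable_const (1:ℝ)).add (hint i i)).mono'
      (((measurable_pi_apply i).comp hm).abs.aestronglyMeasurable) ?_
    filter_upwards with ω
    have h1 : |X ω i * X ω i| = |X ω i| ^ 2 := by rw [abs_mul]; ring
    simp only [Pi.add_apply, Real.norm_eq_abs, abs_abs, h1]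
    nlinarith [abs_nonneg (X ω i), sq_nonneg (|X ω i| - 1)]
  have key : ∀ i j, Integrable (fun ω => (|X ω i| + |x i|) * (|X ω j| + |x j|)) μ := by
    intro i j
    have heq : (fun ω => (|X ω i| + |x i|) * (|X ω j| + |x j|))
        = fun ω => |X ω i * X ω j| + |x j| * |X ω i| + |x i| * |X ω j| + |x i| * |x j| := by
      funext ω; rw [abs_mul]; ring
    rw [heq]
    exact (((hint i j).add ((hXi i).const_mul _)).add ((hXi j).const_mul _)).add
      (integrable_const _)
  have heq2 : (fun ω => Y ω ⬝ᵥ S *ᵥ Y ω) = fun ω => ∑ i, ∑ j, Y ω i * (S i j * Y ω j) := by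
    funext ω
    simp [dotProduct, Matrix.mulVec, Finset.mul_sum]
  rw [heq2]
  refine integrable_finset_sum _ fun i _ => integrable_finset_sum _ fun j _ => ?_
  refine (((key i j).const_mul |S i j|)).mono'
    (((hYm i).mul (((hYm j)).const_mul (S i j))).aestronglyMeasurable) ?_
  filter_upwards with ω
  rw [Real.norm_eq_abs, abs_mul, abs_mul]
  have h1 := hYb ω i
  have h2 := hYb ω j
  have h3 : |Y ω i| * (|S i j| * |Y ω j|) ≤ |S i j| * ((|X ω i| + |x i|) * (|X ω j| + |x j|)) := by
    have := mul_le_mul h1 h2 (abs_nonneg _) (by positivity)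
    nlinarith [abs_nonneg (S i j), abs_nonneg (Y ω i), abs_nonneg (Y ω j)]
  linarith


theorem sigma_expectile_support_stability
    {Ω : Type*} [MeasurableSpace Ω] (μ : Measure Ω) [IsProbabilityMeasure μ]
    {d : ℕ} (S : Matrix (Fin d) (Fin d) ℝ) (hS : S.PosDef) (hpos : ∀ i j, 0 < S i j)
    (X : Ω → Fin d → ℝ) (hm : Measurable X)
    (hint : ∀ i j, Integrable (fun ω => |X ω i * X ω j|) μ)
    (α : ℝ) (hα : α ∈ Set.Ioo (0:ℝ) 1)
    (e : Fin d → ℝ)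
    (he : IsMinOn
      (fun x : Fin d → ℝ => ∫ ω,
        α * ((fun k => max (X ω k - x k) 0) ⬝ᵥ S.mulVec (fun k => max (X ω k - x k) 0))
        + (1-α) * ((fun k => max (x k - X ω k) 0) ⬝ᵥ
              S.mulVec (fun k => max (x k - X ω k) 0)) ∂μ)
      Set.univ e) :
    ∀ k, essInf (fun ω => (X ω k : EReal)) μ ≤ (e k : EReal) ∧
         (e k : EReal) ≤ essSup (fun ω => (X ω k : EReal)) μ := by
  obtain ⟨hα0, hα1⟩ := hα
  have h1α : (0:ℝ) < 1 - α := by linarith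
  set g : (Fin d → ℝ) → Ω → ℝ := fun x ω =>
      α * ((fun i => max (X ω i - x i) 0) ⬝ᵥ S.mulVec (fun i => max (X ω i - x i) 0))
      + (1-α) * ((fun i => max (x i - X ω i) 0) ⬝ᵥ
            S.mulVec (fun i => max (x i - X ω i) 0)) with hg
  have hmin : ∀ x, (∫ ω, g e ω ∂μ) ≤ ∫ ω, g x ω ∂μ :=
    fun x => isMinOn_iff.mp he x (Set.mem_univ x)
  have habs : ∀ (a b : ℝ), |max (a - b) 0| ≤ |a| + |b| := by
    intro a b
    rw [abs_of_nonneg (le_max_right _ _)]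
    refine max_le ?_ (by positivity)
    calc a - b ≤ |a - b| := le_abs_self _
      _ ≤ |a| + |b| := abs_sub _ _
  have hgint : ∀ x, Integrable (g x) μ := by
    intro x
    refine Integrable.add (Integrable.const_mul ?_ α) (Integrable.const_mul ?_ (1-α))
    · refine quad_integrable μ S X hm hint x _ (fun i => ?_) (fun ω i => habs _ _)
      exact (((measurable_pi_apply i).comp hm).sub measurable_const).max measurable_const
    · refine quad_integrable μ S X hm hint x _ (fun i => ?_) (fun ω i => ?_)
      · exact (measurable_const.sub ((measurable_pi_apply i).comp hm)).max measurable_const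
      · calc |max (x i - X ω i) 0| ≤ |x i| + |X ω i| := habs _ _
          _ = |X ω i| + |x i| := by ring
  have contra : ∀ (e' : Fin d → ℝ) (δ : ℝ), 0 < δ →
      (∀ᵐ ω ∂μ, g e' ω + δ ≤ g e ω) → False := by
    intro e' δ hδ hae
    have h1 : (∫ ω, (g e' ω + δ) ∂μ) ≤ ∫ ω, g e ω ∂μ :=
      integral_mono_ae ((hgint e').add (integrable_const δ)) (hgint e) hae
    rw [integral_add (hgint e') (integrable_const δ), integral_const] at h1
    simp only [measure_univ, ENNReal.toReal_one, one_smul, probReal_univ] at h1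
    have h2 := hmin e'
    linarith
  intro k
  constructor
  · by_contra hcon
    push_neg at hcon
    obtain ⟨z, hz1, hz2⟩ := EReal.exists_between_coe_real hcon
    have hzr : e k < z := by exact_mod_cast hz1
    have hae : ∀ᵐ ω ∂μ, z < X ω k := by
      filter_upwards [ae_lt_of_lt_essInf hz2] with ω hω
      exact_mod_cast hω
    set t : ℝ := z - e k with htdef
    have ht : 0 < t := by simp [htdef]; linarith
    refine contra (Function.update e k z) (α * (S k k * t ^ 2))
      (by have := hpos k k; positivity) ?_
    filter_upwards [hae] with ω hω
    have hv : (fun i => max (Function.update e k z i - X ω i) 0)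
        = fun i => max (e i - X ω i) 0 := by
      funext j
      rcases eq_or_ne j k with rfl | hj
      · rw [Function.update_self, max_eq_right (by linarith), max_eq_right (by linarith)]
      · rw [Function.update_of_ne hj]
    have hu : (fun i => max (X ω i - e i) 0)
        = (fun i => max (X ω i - Function.update e k z i) 0) + Pi.single k t := by
      funext j
      rcases eq_or_ne j k with rfl | hj
      · simp only [Pi.add_apply, Function.update_self, Pi.single_eq_same]
        rw [max_eq_left (by linarith), max_eq_left (by linarith)]
        simp [htdef]
      · simp only [Pi.add_apply, Function.update_of_ne hj, Pi.single_eq_of_ne hj, add_zero]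
    have hq := quad_step S hpos k t ht.le
      (fun i => max (X ω i - Function.update e k z i) 0) (fun j => le_max_right _ _)
    simp only [hg]
    rw [hv, hu]
    have hmul := mul_le_mul_of_nonneg_left hq hα0.le
    show α * _ + (1-α) * _ + α * (S k k * t ^ 2) ≤ α * _ + (1-α) * _
    linarith
  · by_contra hcon
    push_neg at hcon
    obtain ⟨z, hz1, hz2⟩ := EReal.exists_between_coe_real hcon
    have hzr : z < e k := by exact_mod_cast hz2
    have hae : ∀ᵐ ω ∂μ, X ω k < z := by
      filter_upwards [ae_lt_of_essSup_lt hz1] with ω hω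
      exact_mod_cast hω
    set t : ℝ := e k - z with htdef
    have ht : 0 < t := by simp [htdef]; linarith
    refine contra (Function.update e k z) ((1-α) * (S k k * t ^ 2))
      (by have := hpos k k; positivity) ?_
    filter_upwards [hae] with ω hω
    have hu : (fun i => max (X ω i - Function.update e k z i) 0)
        = fun i => max (X ω i - e i) 0 := by
      funext j
      rcases eq_or_ne j k with rfl | hj
      · rw [Function.update_self, max_eq_right (by linarith), max_eq_right (by linarith)]
      · rw [Function.update_of_ne hj]
    have hv : (fun i => max (e i - X ω i) 0)
        = (fun i => max (Function.update e k z i - X ω i) 0) + Pi.single k t := by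
      funext j
      rcases eq_or_ne j k with rfl | hj
      · simp only [Pi.add_apply, Function.update_self, Pi.single_eq_same]
        rw [max_eq_left (by linarith), max_eq_left (by linarith)]
        simp [htdef]
      · simp only [Pi.add_apply, Function.update_of_ne hj, Pi.single_eq_of_ne hj, add_zero]
    have hq := quad_step S hpos k t ht.le
      (fun i => max (Function.update e k z i - X ω i) 0) (fun j => le_max_right _ _)
    simp only [hg]
    rw [hu, hv]
    have hmul := mul_le_mul_of_nonneg_left hq h1α.le
    show α * _ + (1-α) * _ + (1-α) * (S k k * t ^ 2) ≤ α * _ + (1-α) * _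
    linarith
end

section
/- Asymptotic behavior: for an integrable random vector X in ℝ^d and a matrix Σ with all entries positive (satisfying the Σ-expectile construction assumptions), lim_{α→1} e_α^Σ(X) = (essSup(X₁),…,essSup(X_d)) and lim_{α→0} e_α^Σ(X) = (essInf(X₁),…,essInf(X_d)), componentwise. -/
open MeasureTheory Matrix Filter Topology

section Integ
variable {Ω : Type*} [MeasurableSpace Ω] {μ : Measure Ω} [IsFiniteMeasure μ] {d : ℕ}
variable {S : Matrix (Fin d) (Fin d) ℝ} {X : Ω → Fin d → ℝ}

def qf (S : Matrix (Fin d) (Fin d) ℝ) (v : Fin d → ℝ) : ℝ := v ⬝ᵥ S.mulVec v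

lemma qf_eq (S : Matrix (Fin d) (Fin d) ℝ) (v : Fin d → ℝ) :
    qf S v = ∑ i, ∑ j, v i * (S i j * v j) := by
  simp [qf, dotProduct, Matrix.mulVec, Finset.mul_sum]

lemma qf_nonneg {S : Matrix (Fin d) (Fin d) ℝ} (hS : ∀ i j, 0 ≤ S i j)
    {v : Fin d → ℝ} (hv : ∀ i, 0 ≤ v i) : 0 ≤ qf S v := by
  rw [qf_eq]
  exact Finset.sum_nonneg fun i _ => Finset.sum_nonneg fun j _ =>
    mul_nonneg (hv i) (mul_nonneg (hS i j) (hv j))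

lemma qf_mono {S : Matrix (Fin d) (Fin d) ℝ} (hS : ∀ i j, 0 ≤ S i j)
    {v w : Fin d → ℝ} (hv : ∀ i, 0 ≤ v i) (hvw : ∀ i, v i ≤ w i) :
    qf S v ≤ qf S w := by
  rw [qf_eq, qf_eq]
  refine Finset.sum_le_sum fun i _ => Finset.sum_le_sum fun j _ => ?_
  have h := mul_le_mul_of_nonneg_left
    (mul_le_mul (hvw i) (hvw j) (hv j) ((hv i).trans (hvw i))) (hS i j)
  calc v i * (S i j * v j) = S i j * (v i * v j) := by ring
    _ ≤ S i j * (w i * w j) := h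
    _ = w i * (S i j * w j) := by ring

lemma qf_sub {S : Matrix (Fin d) (Fin d) ℝ} (hS : ∀ i j, 0 ≤ S i j)
    {v v' : Fin d → ℝ} (h0 : ∀ i, 0 ≤ v' i) (hle : ∀ i, v' i ≤ v i) (k : Fin d) :
    S k k * (v k ^ 2 - v' k ^ 2) ≤ qf S v - qf S v' := by
  rw [qf_eq, qf_eq, ← Finset.sum_sub_distrib]
  simp_rw [← Finset.sum_sub_distrib]
  have hterm : ∀ i j : Fin d, 0 ≤ v i * (S i j * v j) - v' i * (S i j * v' j) := by
    intro i j
    have h := mul_le_mul_of_nonneg_left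
      (mul_le_mul (hle i) (hle j) (h0 j) ((h0 i).trans (hle i))) (hS i j)
    nlinarith [h]
  calc S k k * (v k ^ 2 - v' k ^ 2)
      = v k * (S k k * v k) - v' k * (S k k * v' k) := by ring
    _ ≤ ∑ j, (v k * (S k j * v j) - v' k * (S k j * v' j)) := by
        refine Finset.single_le_sum (fun j _ => hterm k j) (Finset.mem_univ k)
    _ ≤ ∑ i, ∑ j, (v i * (S i j * v j) - v' i * (S i j * v' j)) := by
        refine Finset.single_le_sum
          (f := fun i => ∑ j, (v i * (S i j * v j) - v' i * (S i j * v' j)))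
          (fun i _ => ?_) (Finset.mem_univ k)
        exact Finset.sum_nonneg fun j _ => hterm i j

lemma qf_diag_le {S : Matrix (Fin d) (Fin d) ℝ} (hS : ∀ i j, 0 ≤ S i j)
    {v : Fin d → ℝ} (hv : ∀ i, 0 ≤ v i) (k : Fin d) :
    S k k * v k ^ 2 ≤ qf S v := by
  have := qf_sub hS (v' := 0) (v := v) (fun i => le_rfl) (fun i => hv i) k
  simpa [qf_eq] using this

lemma integ_qf_bound (hint1 : ∀ i, Integrable (fun ω => |X ω i|) μ)
    (hint : ∀ i j, Integrable (fun ω => |X ω i * X ω j|) μ) (x : Fin d → ℝ) :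
    Integrable (fun ω => qf S (fun i => |X ω i| + |x i|)) μ := by
  simp_rw [qf_eq]
  refine integrable_finset_sum _ fun i _ => integrable_finset_sum _ fun j _ => ?_
  have h1 : Integrable (fun ω => |X ω i| * |X ω j|) μ := by
    simpa [abs_mul] using hint i j
  have heq : (fun ω => (|X ω i| + |x i|) * (S i j * (|X ω j| + |x j|))) =
      fun ω => S i j * (|X ω i| * |X ω j|) + (S i j * |x j|) * |X ω i|
        + (S i j * |x i|) * |X ω j| + S i j * (|x i| * |x j|) := by
    funext ω; ring
  rw [heq]
  exact (((h1.const_mul _).add ((hint1 i).const_mul _)).add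
    ((hint1 j).const_mul _)).add (integrable_const _)

lemma meas_qf_max (hm : Measurable X) (x : Fin d → ℝ) :
    Measurable fun ω => qf S (fun i => max (X ω i - x i) 0) := by
  simp_rw [qf_eq]
  refine Finset.measurable_sum _ fun i _ => Finset.measurable_sum _ fun j _ => ?_
  exact ((((measurable_pi_apply i).comp hm).sub measurable_const).max measurable_const).mul
    (measurable_const.mul
      ((((measurable_pi_apply j).comp hm).sub measurable_const).max measurable_const))

lemma max_le_abs_add (a b : ℝ) : max (a - b) 0 ≤ |a| + |b| := by
  refine max_le ?_ (by positivity)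
  have h1 := le_abs_self a
  have h2 := neg_abs_le b
  linarith

lemma integ_qf_max (hS0 : ∀ i j, 0 ≤ S i j) (hm : Measurable X)
    (hint1 : ∀ i, Integrable (fun ω => |X ω i|) μ)
    (hint : ∀ i j, Integrable (fun ω => |X ω i * X ω j|) μ) (x : Fin d → ℝ) :
    Integrable (fun ω => qf S (fun i => max (X ω i - x i) 0)) μ := by
  refine (integ_qf_bound (S := S) hint1 hint x).mono (meas_qf_max hm x).aestronglyMeasurable ?_
  refine Eventually.of_forall fun ω => ?_
  have h1 : ∀ i, 0 ≤ max (X ω i - x i) 0 := fun i => le_max_right _ _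
  have hb : ∀ i, (0:ℝ) ≤ |X ω i| + |x i| := fun i => by positivity
  rw [Real.norm_eq_abs, Real.norm_eq_abs, abs_of_nonneg (qf_nonneg hS0 h1),
    abs_of_nonneg (qf_nonneg hS0 hb)]
  exact qf_mono hS0 h1 fun i => max_le_abs_add _ _

lemma integ_qf_maxN (hS0 : ∀ i j, 0 ≤ S i j) (hm : Measurable X)
    (hint1 : ∀ i, Integrable (fun ω => |X ω i|) μ)
    (hint : ∀ i j, Integrable (fun ω => |X ω i * X ω j|) μ) (x : Fin d → ℝ) :
    Integrable (fun ω => qf S (fun i => max (x i - X ω i) 0)) μ := by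
  have hm' : Measurable fun ω => -(X ω) := hm.neg
  have hint1' : ∀ i, Integrable (fun ω => |(-(X ω)) i|) μ := fun i => by
    simpa using hint1 i
  have hint' : ∀ i j, Integrable (fun ω => |(-(X ω)) i * (-(X ω)) j|) μ := fun i j => by
    simpa [neg_mul_neg] using hint i j
  have h := integ_qf_max (X := fun ω => -(X ω)) hS0 hm' hint1' hint' (-x)
  refine h.congr (Eventually.of_forall fun ω => ?_)
  simp only [Pi.neg_apply, neg_sub_neg]

lemma meas_qf_maxN (hm : Measurable X) (x : Fin d → ℝ) :
    Measurable fun ω => qf S (fun i => max (x i - X ω i) 0) := by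
  simp_rw [qf_eq]
  refine Finset.measurable_sum _ fun i _ => Finset.measurable_sum _ fun j _ => ?_
  exact ((measurable_const.sub ((measurable_pi_apply i).comp hm)).max measurable_const).mul
    (measurable_const.mul
      ((measurable_const.sub ((measurable_pi_apply j).comp hm)).max measurable_const))

lemma integ_sq (hm : Measurable X)
    (hint1 : ∀ i, Integrable (fun ω => |X ω i|) μ)
    (hint : ∀ i j, Integrable (fun ω => |X ω i * X ω j|) μ) (k : Fin d) (m : ℝ) :
    Integrable (fun ω => (max (X ω k - m) 0) ^ 2) μ := by
  have hg : Integrable (fun ω => |X ω k * X ω k| + 2 * |m| * |X ω k| + |m| * |m|) μ :=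
    ((hint k k).add ((hint1 k).const_mul _)).add (integrable_const _)
  refine hg.mono ?_ (Eventually.of_forall fun ω => ?_)
  · exact (((((measurable_pi_apply k).comp hm).sub measurable_const).max
      measurable_const).pow_const 2).aestronglyMeasurable
  · rw [Real.norm_eq_abs, Real.norm_eq_abs]
    have h1 : max (X ω k - m) 0 ≤ |X ω k| + |m| := max_le_abs_add _ _
    have h2 : (0:ℝ) ≤ max (X ω k - m) 0 := le_max_right _ _
    have h3 : |X ω k * X ω k| = |X ω k| * |X ω k| := abs_mul _ _
    have h4 := abs_nonneg (X ω k)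
    have h5 := abs_nonneg m
    rw [abs_of_nonneg (by positivity), abs_of_nonneg (by nlinarith)]
    nlinarith

end Integ

section DCT
variable {Ω : Type*} [MeasurableSpace Ω] {μ : Measure Ω} [IsFiniteMeasure μ] {d : ℕ}
variable {S : Matrix (Fin d) (Fin d) ℝ} {X : Ω → Fin d → ℝ}

lemma tendsto_A (hS0 : ∀ i j, 0 ≤ S i j) (hm : Measurable X)
    (hint1 : ∀ i, Integrable (fun ω => |X ω i|) μ)
    (hint : ∀ i j, Integrable (fun ω => |X ω i * X ω j|) μ) :
    Tendsto (fun n : ℕ => ∫ ω, qf S (fun i => max (X ω i - n) 0) ∂μ) atTop (𝓝 0) := by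
  have h := tendsto_integral_of_dominated_convergence (μ := μ)
    (F := fun (n : ℕ) ω => qf S (fun i => max (X ω i - n) 0)) (f := fun _ => (0:ℝ))
    (fun ω => qf S (fun i => |X ω i| + |(0 : Fin d → ℝ) i|))
    (fun n => (meas_qf_max (S := S) hm (fun _ => (n:ℝ))).aestronglyMeasurable)
    (integ_qf_bound (S := S) hint1 hint 0) ?_ ?_
  · simpa using h
  · intro n
    refine Eventually.of_forall fun ω => ?_
    rw [Real.norm_eq_abs, abs_of_nonneg (qf_nonneg hS0 fun i => le_max_right _ _)]
    refine qf_mono hS0 (fun i => le_max_right _ _) fun i => ?_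
    have h1 : max (X ω i - n) 0 ≤ |X ω i| := by
      refine max_le ?_ (abs_nonneg _)
      have := le_abs_self (X ω i)
      have : (0:ℝ) ≤ n := Nat.cast_nonneg n
      linarith [le_abs_self (X ω i)]
    simpa using h1
  · refine Eventually.of_forall fun ω => ?_
    refine Tendsto.congr' ?_ tendsto_const_nhds
    have hev : ∀ᶠ n : ℕ in atTop, ∀ i, max (X ω i - n) 0 = 0 := by
      rw [eventually_all]
      intro i
      obtain ⟨N, hN⟩ := exists_nat_ge (X ω i)
      filter_upwards [eventually_ge_atTop N] with n hn
      have h2 : (N:ℝ) ≤ n := Nat.cast_le.2 hn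
      exact max_eq_right (by linarith)
    filter_upwards [hev] with n hn
    have h3 : (fun i => max (X ω i - n) 0) = fun _ => (0:ℝ) := funext hn
    rw [h3]
    simp [qf_eq]

end DCT

theorem key_essSup {Ω : Type*} [MeasurableSpace Ω] (μ : Measure Ω) [IsProbabilityMeasure μ]
    {d : ℕ} (S : Matrix (Fin d) (Fin d) ℝ) (hpos : ∀ i j, 0 < S i j)
    (X : Ω → Fin d → ℝ) (hm : Measurable X)
    (hint1 : ∀ i, Integrable (fun ω => |X ω i|) μ)
    (hint : ∀ i j, Integrable (fun ω => |X ω i * X ω j|) μ)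
    (e : ℝ → Fin d → ℝ)
    (he : ∀ α ∈ Set.Ioo (0:ℝ) 1, IsMinOn
      (fun x : Fin d → ℝ => ∫ ω,
        α * ((fun k => max (X ω k - x k) 0) ⬝ᵥ S.mulVec (fun k => max (X ω k - x k) 0))
        + (1-α) * ((fun k => max (x k - X ω k) 0) ⬝ᵥ
              S.mulVec (fun k => max (x k - X ω k) 0)) ∂μ)
      Set.univ (e α)) (k : Fin d) :
    Tendsto (fun α => ((e α k : ℝ) : EReal)) (nhdsWithin 1 (Set.Ioo (0:ℝ) 1))
      (nhds (essSup (fun ω => (X ω k : EReal)) μ)) := by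
  have hS0 : ∀ i j, 0 ≤ S i j := fun i j => (hpos i j).le
  have hFmin : ∀ α ∈ Set.Ioo (0:ℝ) 1, ∀ x : Fin d → ℝ,
      (∫ ω, α * qf S (fun i => max (X ω i - e α i) 0)
        + (1-α) * qf S (fun i => max (e α i - X ω i) 0) ∂μ)
      ≤ ∫ ω, α * qf S (fun i => max (X ω i - x i) 0)
        + (1-α) * qf S (fun i => max (x i - X ω i) 0) ∂μ :=
    fun α hα x => isMinOn_iff.1 (he α hα) x (Set.mem_univ x)
  have hIP : ∀ x : Fin d → ℝ, Integrable (fun ω => qf S (fun i => max (X ω i - x i) 0)) μ :=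
    fun x => integ_qf_max hS0 hm hint1 hint x
  have hIN : ∀ x : Fin d → ℝ, Integrable (fun ω => qf S (fun i => max (x i - X ω i) 0)) μ :=
    fun x => integ_qf_maxN hS0 hm hint1 hint x
  have hII : ∀ (α : ℝ) (x : Fin d → ℝ), Integrable (fun ω =>
      α * qf S (fun i => max (X ω i - x i) 0)
      + (1-α) * qf S (fun i => max (x i - X ω i) 0)) μ :=
    fun α x => ((hIP x).const_mul α).add ((hIN x).const_mul (1-α))
  have hFsplit : ∀ (α : ℝ) (x : Fin d → ℝ),
      (∫ ω, α * qf S (fun i => max (X ω i - x i) 0)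
        + (1-α) * qf S (fun i => max (x i - X ω i) 0) ∂μ)
      = α * (∫ ω, qf S (fun i => max (X ω i - x i) 0) ∂μ)
        + (1-α) * (∫ ω, qf S (fun i => max (x i - X ω i) 0) ∂μ) := by
    intro α x
    rw [integral_add ((hIP x).const_mul α) ((hIN x).const_mul (1-α)),
      integral_const_mul, integral_const_mul]
  -- Step 1
  have step1 : ∀ m : ℝ, (m : EReal) < essSup (fun ω => (X ω k : EReal)) μ →
      ∀ᶠ α in nhdsWithin 1 (Set.Ioo (0:ℝ) 1), m < e α k := by
    intro m hmlt
    have hfreq : ∃ᶠ ω in ae μ, (m : EReal) < (X ω k : EReal) :=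
      frequently_lt_of_lt_limsup (by isBoundedDefault) hmlt
    have hmeas0 : μ {ω | m < X ω k} ≠ 0 := by
      have h := frequently_ae_iff.1 hfreq
      simpa [EReal.coe_lt_coe_iff] using h
    have hgint : Integrable (fun ω => (max (X ω k - m) 0) ^ 2) μ := integ_sq hm hint1 hint k m
    have hδ : 0 < ∫ ω, (max (X ω k - m) 0) ^ 2 ∂μ := by
      rw [integral_pos_iff_support_of_nonneg (fun ω => sq_nonneg _) hgint]
      refine lt_of_lt_of_le (lt_of_le_of_ne zero_le (Ne.symm hmeas0)) (measure_mono ?_)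
      intro ω hω
      have hω' : m < X ω k := hω
      have : (0:ℝ) < X ω k - m := sub_pos.2 hω'
      simp only [Function.mem_support]
      have hmx : max (X ω k - m) 0 = X ω k - m := max_eq_left this.le
      rw [hmx]
      positivity
    set δ : ℝ := ∫ ω, (max (X ω k - m) 0) ^ 2 ∂μ with hδdef
    have h0 : (0:ℝ) < S k k * δ / 2 := by
      have := hpos k k
      positivity
    have hA := tendsto_A (S := S) (μ := μ) hS0 hm hint1 hint
    obtain ⟨n, hnA⟩ := (hA.eventually (eventually_lt_nhds h0)).exists
    set Ac : ℝ := ∫ ω, qf S (fun i => max (X ω i - (n:ℝ)) 0) ∂μ with hAc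
    set Bc : ℝ := ∫ ω, qf S (fun i => max ((n:ℝ) - X ω i) 0) ∂μ with hBc
    have hcont : Tendsto (fun α : ℝ => α * (S k k * δ / 2) - (1-α) * Bc) (𝓝 1)
        (𝓝 (S k k * δ / 2)) := by
      have hc : Continuous fun α : ℝ => α * (S k k * δ / 2) - (1-α) * Bc :=
        (continuous_id.mul continuous_const).sub
          ((continuous_const.sub continuous_id).mul continuous_const)
      have h := hc.tendsto 1
      simpa using h
    have hev2 : ∀ᶠ α in nhdsWithin 1 (Set.Ioo (0:ℝ) 1), (1-α) * Bc < α * (S k k * δ / 2) := by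
      have h := hcont.eventually (eventually_gt_nhds h0)
      refine (h.filter_mono nhdsWithin_le_nhds).mono fun α hα => by linarith
    filter_upwards [hev2, eventually_mem_nhdsWithin] with α h2 hα
    by_contra hle
    push_neg at hle
    have hpt : ∀ ω, α * (S k k * (max (X ω k - m) 0) ^ 2) ≤
        α * qf S (fun i => max (X ω i - e α i) 0)
        + (1-α) * qf S (fun i => max (e α i - X ω i) 0) := by
      intro ω
      have hmax : max (X ω k - m) 0 ≤ max (X ω k - e α k) 0 :=
        max_le_max (by linarith) le_rfl
      have h1 : (max (X ω k - m) 0)^2 ≤ (max (X ω k - e α k) 0)^2 := by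
        have hnn := le_max_right (X ω k - m) (0:ℝ)
        nlinarith [hmax]
      have h2' : S k k * (max (X ω k - e α k) 0)^2 ≤ qf S (fun i => max (X ω i - e α i) 0) :=
        qf_diag_le hS0 (v := fun i => max (X ω i - e α i) 0) (fun i => le_max_right _ _) k
      have h3 : 0 ≤ qf S (fun i => max (e α i - X ω i) 0) :=
        qf_nonneg hS0 (fun i => le_max_right _ _)
      have h4 : S k k * (max (X ω k - m) 0)^2 ≤ qf S (fun i => max (X ω i - e α i) 0) :=
        le_trans (mul_le_mul_of_nonneg_left h1 (hS0 k k)) h2'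
      have h5 := mul_le_mul_of_nonneg_left h4 hα.1.le
      nlinarith [mul_nonneg (by linarith [hα.2] : (0:ℝ) ≤ 1-α) h3]
    have hlow : α * (S k k * δ) ≤ ∫ ω, α * qf S (fun i => max (X ω i - e α i) 0)
        + (1-α) * qf S (fun i => max (e α i - X ω i) 0) ∂μ := by
      have hint_lhs : Integrable (fun ω => α * (S k k * (max (X ω k - m) 0) ^ 2)) μ :=
        (hgint.const_mul _).const_mul _
      have hmono := integral_mono hint_lhs (hII α (e α)) hpt
      calc α * (S k k * δ) = ∫ ω, α * (S k k * (max (X ω k - m) 0) ^ 2) ∂μ := by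
            rw [integral_const_mul, integral_const_mul]
        _ ≤ _ := hmono
    have hup := hFmin α hα (fun _ => (n:ℝ))
    have hsplitc := hFsplit α (fun _ => (n:ℝ))
    rw [hsplitc] at hup
    have hAc' : α * Ac < α * (S k k * δ / 2) := mul_lt_mul_of_pos_left hnA hα.1
    linarith
  -- Step 2
  have step2 : ∀ s : ℝ, essSup (fun ω => (X ω k : EReal)) μ ≤ (s : EReal) →
      ∀ α ∈ Set.Ioo (0:ℝ) 1, e α k ≤ s := by
    intro s hs α hα
    by_contra hgt
    push_neg at hgt
    have hae : ∀ᵐ ω ∂μ, X ω k ≤ s := by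
      filter_upwards [ae_le_essSup (μ := μ) (f := fun ω => (X ω k : EReal))] with ω hω
      exact EReal.coe_le_coe_iff.1 (hω.trans hs)
    set x' : Fin d → ℝ := Function.update (e α) k s with hx'
    have hptw : ∀ᵐ ω ∂μ, (α * qf S (fun i => max (X ω i - x' i) 0)
        + (1-α) * qf S (fun i => max (x' i - X ω i) 0))
        + (1-α) * (S k k * (e α k - s)^2)
        ≤ α * qf S (fun i => max (X ω i - e α i) 0)
        + (1-α) * qf S (fun i => max (e α i - X ω i) 0) := by
      filter_upwards [hae] with ω hX
      have hP : (fun i => max (X ω i - x' i) 0) = (fun i => max (X ω i - e α i) 0) := by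
        funext i
        rcases eq_or_ne i k with rfl | hik
        · rw [hx', Function.update_self]
          rw [max_eq_right (by linarith), max_eq_right (by linarith)]
        · rw [hx', Function.update_of_ne hik]
      have hle' : ∀ i, max (x' i - X ω i) 0 ≤ max (e α i - X ω i) 0 := by
        intro i
        rcases eq_or_ne i k with rfl | hik
        · rw [hx', Function.update_self]; exact max_le_max (by linarith) le_rfl
        · rw [hx', Function.update_of_ne hik]
      have h0' : ∀ i, 0 ≤ max (x' i - X ω i) 0 := fun i => le_max_right _ _
      have hsub := qf_sub hS0 h0' hle' k
      have hvk : max (e α k - X ω k) 0 = e α k - X ω k := max_eq_left (by linarith)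
      have hv'k : max (x' k - X ω k) 0 = s - X ω k := by
        rw [hx', Function.update_self]; exact max_eq_left (by linarith)
      have hsq : (e α k - s)^2 ≤ (max (e α k - X ω k) 0)^2 - (max (x' k - X ω k) 0)^2 := by
        rw [hvk, hv'k]; nlinarith
      have h6 : S k k * (e α k - s)^2 ≤
          qf S (fun i => max (e α i - X ω i) 0) - qf S (fun i => max (x' i - X ω i) 0) :=
        le_trans (mul_le_mul_of_nonneg_left hsq (hS0 k k)) hsub
      have h7 : (0:ℝ) ≤ 1 - α := by linarith [hα.2]
      have h8 := mul_le_mul_of_nonneg_left h6 h7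
      rw [hP]
      nlinarith [h8]
    have hIx' := hII α x'
    have hmono := integral_mono_ae
      (f := fun ω => (α * qf S (fun i => max (X ω i - x' i) 0)
        + (1-α) * qf S (fun i => max (x' i - X ω i) 0))
        + (1-α) * (S k k * (e α k - s)^2))
      (g := fun ω => α * qf S (fun i => max (X ω i - e α i) 0)
        + (1-α) * qf S (fun i => max (e α i - X ω i) 0))
      (hIx'.add (integrable_const _)) (hII α (e α)) hptw
    have heq : (∫ ω, ((α * qf S (fun i => max (X ω i - x' i) 0)
        + (1-α) * qf S (fun i => max (x' i - X ω i) 0))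
        + (1-α) * (S k k * (e α k - s)^2)) ∂μ)
        = (∫ ω, (α * qf S (fun i => max (X ω i - x' i) 0)
        + (1-α) * qf S (fun i => max (x' i - X ω i) 0)) ∂μ)
        + (1-α) * (S k k * (e α k - s)^2) := by
      rw [integral_add hIx' (integrable_const _), integral_const]
      simp [measure_univ]
    rw [heq] at hmono
    have hle2 := hFmin α hα x'
    have hpos2 : 0 < (1-α) * (S k k * (e α k - s)^2) := by
      have hkk := hpos k k
      have h10 : 0 < (e α k - s)^2 := pow_pos (by linarith) 2
      have h11 : 0 < 1 - α := by linarith [hα.2]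
      exact mul_pos h11 (mul_pos hkk h10)
    linarith
  -- Assembly
  rcases em (essSup (fun ω => (X ω k : EReal)) μ = ⊤) with hT | hT
  · rw [hT, EReal.tendsto_nhds_top_iff_real]
    intro m
    filter_upwards [step1 m (by rw [hT]; exact EReal.coe_lt_top m)] with α hα
    exact EReal.coe_lt_coe_iff.2 hα
  · have hBot : essSup (fun ω => (X ω k : EReal)) μ ≠ ⊥ := by
      intro h
      have hae := ae_le_essSup (μ := μ) (f := fun ω => (X ω k : EReal))
      rw [h] at hae
      obtain ⟨ω, hω⟩ := hae.exists
      exact (EReal.coe_ne_bot (X ω k)) (le_bot_iff.1 hω)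
    obtain ⟨s, hs⟩ : ∃ s : ℝ, essSup (fun ω => (X ω k : EReal)) μ = (s : EReal) :=
      ⟨(essSup (fun ω => (X ω k : EReal)) μ).toReal, (EReal.coe_toReal hT hBot).symm⟩
    rw [hs, EReal.tendsto_coe, tendsto_order]
    constructor
    · intro m hm
      exact step1 m (by rw [hs]; exact_mod_cast hm)
    · intro b hb
      filter_upwards [eventually_mem_nhdsWithin] with α hα
      exact lt_of_le_of_lt (step2 s (le_of_eq hs) α hα) hb


theorem sigma_expectile_asymptotic
    {Ω : Type*} [MeasurableSpace Ω] (μ : Measure Ω) [IsProbabilityMeasure μ]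
    {d : ℕ} (S : Matrix (Fin d) (Fin d) ℝ) (hS : S.PosDef)
    (hpos : ∀ i j, 0 < S i j) (hdom : ∀ i j, S i j ≤ S i i)
    (X : Ω → Fin d → ℝ) (hm : Measurable X)
    (hint1 : ∀ i, Integrable (fun ω => |X ω i|) μ)
    (hint : ∀ i j, Integrable (fun ω => |X ω i * X ω j|) μ)
    (e : ℝ → Fin d → ℝ)
    (he : ∀ α ∈ Set.Ioo (0:ℝ) 1, IsMinOn
      (fun x : Fin d → ℝ => ∫ ω,
        α * ((fun k => max (X ω k - x k) 0) ⬝ᵥ S.mulVec (fun k => max (X ω k - x k) 0))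
        + (1-α) * ((fun k => max (x k - X ω k) 0) ⬝ᵥ
              S.mulVec (fun k => max (x k - X ω k) 0)) ∂μ)
      Set.univ (e α)) :
    ∀ k, Tendsto (fun α => ((e α k : ℝ) : EReal)) (nhdsWithin 1 (Set.Ioo (0:ℝ) 1))
           (nhds (essSup (fun ω => (X ω k : EReal)) μ)) ∧
         Tendsto (fun α => ((e α k : ℝ) : EReal)) (nhdsWithin 0 (Set.Ioo (0:ℝ) 1))
           (nhds (essInf (fun ω => (X ω k : EReal)) μ)) := by
  intro k
  constructor
  · exact key_essSup μ S hpos X hm hint1 hint e he k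
  · set X' : Ω → Fin d → ℝ := fun ω => -(X ω) with hX'
    have hm' : Measurable X' := hm.neg
    have hint1' : ∀ i, Integrable (fun ω => |X' ω i|) μ := fun i => by
      simpa [hX'] using hint1 i
    have hint' : ∀ i j, Integrable (fun ω => |X' ω i * X' ω j|) μ := fun i j => by
      simpa [hX', neg_mul_neg] using hint i j
    set e' : ℝ → Fin d → ℝ := fun β => -(e (1-β)) with he'def
    have hkey : ∀ (β : ℝ) (y : Fin d → ℝ),
        (∫ ω, β * ((fun k => max (X' ω k - y k) 0) ⬝ᵥ S.mulVec (fun k => max (X' ω k - y k) 0))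
          + (1-β) * ((fun k => max (y k - X' ω k) 0) ⬝ᵥ
              S.mulVec (fun k => max (y k - X' ω k) 0)) ∂μ)
        = ∫ ω, (1-β) * ((fun k => max (X ω k - (-y) k) 0) ⬝ᵥ
              S.mulVec (fun k => max (X ω k - (-y) k) 0))
          + (1-(1-β)) * ((fun k => max ((-y) k - X ω k) 0) ⬝ᵥ
              S.mulVec (fun k => max ((-y) k - X ω k) 0)) ∂μ := by
      intro β y
      congr 1
      funext ω
      have h1 : (fun k => max (X' ω k - y k) 0) = (fun k => max ((-y) k - X ω k) 0) := by
        funext i; simp only [hX', Pi.neg_apply]; congr 1; ring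
      have h2 : (fun k => max (y k - X' ω k) 0) = (fun k => max (X ω k - (-y) k) 0) := by
        funext i; simp only [hX', Pi.neg_apply]; congr 1; ring
      rw [h1, h2]; ring
    have he2 : ∀ β ∈ Set.Ioo (0:ℝ) 1, IsMinOn
        (fun x : Fin d → ℝ => ∫ ω,
          β * ((fun k => max (X' ω k - x k) 0) ⬝ᵥ S.mulVec (fun k => max (X' ω k - x k) 0))
          + (1-β) * ((fun k => max (x k - X' ω k) 0) ⬝ᵥ
              S.mulVec (fun k => max (x k - X' ω k) 0)) ∂μ)
        Set.univ (e' β) := by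
      intro β hβ
      have hβ' : (1-β) ∈ Set.Ioo (0:ℝ) 1 := ⟨by linarith [hβ.2], by linarith [hβ.1]⟩
      rw [isMinOn_iff]
      intro x _
      have hmin := isMinOn_iff.1 (he (1-β) hβ') (-x) (Set.mem_univ _)
      have hneg : -(e' β) = e (1-β) := by simp [he'def]
      beta_reduce
      rw [hkey β (e' β), hkey β x, hneg]
      exact hmin
    have h1 := key_essSup μ S hpos X' hm' hint1' hint' e' he2 k
    have hmap : Tendsto (fun α : ℝ => 1-α) (nhdsWithin 0 (Set.Ioo (0:ℝ) 1))
        (nhdsWithin 1 (Set.Ioo (0:ℝ) 1)) := by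
      rw [tendsto_nhdsWithin_iff]
      constructor
      · have hc0 : Continuous fun α : ℝ => 1-α := continuous_const.sub continuous_id
        have hc : Tendsto (fun α : ℝ => 1-α) (𝓝 0) (𝓝 1) := by
          have h := hc0.tendsto (0:ℝ)
          simpa using h
        exact hc.mono_left nhdsWithin_le_nhds
      · filter_upwards [eventually_mem_nhdsWithin] with α hα
        exact ⟨by linarith [hα.2], by linarith [hα.1]⟩
    have h2 := h1.comp hmap
    have h3 : Tendsto (fun α => ((-(e α k) : ℝ) : EReal)) (nhdsWithin 0 (Set.Ioo (0:ℝ) 1))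
        (𝓝 (essSup (fun ω => (X' ω k : EReal)) μ)) := by
      refine h2.congr fun α => ?_
      simp [he'def, sub_sub_cancel]
    have h5 := ((continuous_neg (G := EReal)).tendsto _).comp h3
    have hsup : -(essSup (fun ω => (X' ω k : EReal)) μ)
        = essInf (fun ω => (X ω k : EReal)) μ := by
      have hfun : (fun ω => (X' ω k : EReal)) = -(fun ω => ((X ω k : EReal))) := by
        funext ω; simp [hX', EReal.coe_neg]
      rw [hfun]
      have h := EReal.limsup_neg (f := ae μ) (v := fun ω => ((X ω k : EReal)))
      rw [show essSup (-(fun ω => ((X ω k : EReal)))) μ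
          = limsup (-(fun ω => ((X ω k : EReal)))) (ae μ) from rfl, h]
      rw [show essInf (fun ω => ((X ω k : EReal))) μ
          = liminf (fun ω => ((X ω k : EReal))) (ae μ) from rfl]
      rw [neg_neg]
    have h6 : Tendsto (fun α => ((e α k : ℝ) : EReal)) (nhdsWithin 0 (Set.Ioo (0:ℝ) 1))
        (𝓝 (-(essSup (fun ω => (X' ω k : EReal)) μ))) := by
      refine h5.congr fun α => ?_
      simp [EReal.coe_neg]
    rw [hsup] at h6
    exact h6
end
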